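/- arXiv:1210.2481 — 7 statements merged into one kernel-verified Lean document; each statement's English description precedes it below -/
import Mathlib

section
/- Let M be a Kripke model whose frame satisfies Γ, which globally satisfies τ, and which contains a world satisfying P_{00}. Then there is a map f : ℕ×ℕ → W such that for all i,j ∈ ℕ: f(i,j) satisfies P_{(i mod 3)(j mod 3)}, R f(i,j) f(i+1,j), and R f(i,j) f(i,j+1). (In other words, the standard infinite grid maps homomorphically into every such model.) -/
/-- Modal formulas over propositional variables indexed by `ℕ`. -/
inductive ModalFormula : Type
  | var : ℕ → ModalFormula
  | neg : ModalFormula → ModalFormula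
  | and : ModalFormula → ModalFormula → ModalFormula
  | or  : ModalFormula → ModalFormula → ModalFormula
  | dia : ModalFormula → ModalFormula
  | box : ModalFormula → ModalFormula

namespace ModalFormula

/-- The canonical encoding of modal formulas by natural numbers. -/
def encode : ModalFormula → ℕ
  | var n => 6 * n
  | neg f => 6 * encode f + 1
  | dia f => 6 * encode f + 2
  | box f => 6 * encode f + 3
  | and f g => 6 * Nat.pair (encode f) (encode g) + 4
  | or f g  => 6 * Nat.pair (encode f) (encode g) + 5

/-- The canonical decoding of natural numbers as modal formulas. -/
def ofNat (n : ℕ) : ModalFormula :=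
  if h0 : n % 6 = 0 then var (n / 6)
  else
    have hn : 0 < n := Nat.pos_of_ne_zero (fun h => h0 (by simp [h]))
    have hd : n / 6 < n := Nat.div_lt_self hn (by norm_num)
    have h1 : (n / 6).unpair.1 < n := lt_of_le_of_lt (Nat.unpair_left_le _) hd
    have h2 : (n / 6).unpair.2 < n := lt_of_le_of_lt (Nat.unpair_right_le _) hd
    if n % 6 = 1 then neg (ofNat (n / 6))
    else if n % 6 = 2 then dia (ofNat (n / 6))
    else if n % 6 = 3 then box (ofNat (n / 6))
    else if n % 6 = 4 then and (ofNat (n / 6).unpair.1) (ofNat (n / 6).unpair.2)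
    else or (ofNat (n / 6).unpair.1) (ofNat (n / 6).unpair.2)
  termination_by n
  decreasing_by all_goals assumption

theorem ofNat_encode : ∀ f : ModalFormula, ofNat (encode f) = f := by
  intro f
  induction f with
  | var n =>
      rw [encode, ofNat]
      simp [Nat.mul_mod_right, Nat.mul_div_cancel_left]
  | neg f ih =>
      rw [encode, ofNat]
      have e1 : (6 * encode f + 1) % 6 = 1 := by omega
      have e2 : (6 * encode f + 1) / 6 = encode f := by omega
      simp [e1, e2, ih]
  | and f g ihf ihg =>
      rw [encode, ofNat]
      have e1 : (6 * Nat.pair (encode f) (encode g) + 4) % 6 = 4 := by omega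
      have e2 : (6 * Nat.pair (encode f) (encode g) + 4) / 6 = Nat.pair (encode f) (encode g) := by
        omega
      simp [e1, e2, ihf, ihg]
  | or f g ihf ihg =>
      rw [encode, ofNat]
      have e1 : (6 * Nat.pair (encode f) (encode g) + 5) % 6 = 5 := by omega
      have e2 : (6 * Nat.pair (encode f) (encode g) + 5) / 6 = Nat.pair (encode f) (encode g) := by
        omega
      simp [e1, e2, ihf, ihg]
  | dia f ih =>
      rw [encode, ofNat]
      have e1 : (6 * encode f + 2) % 6 = 2 := by omega
      have e2 : (6 * encode f + 2) / 6 = encode f := by omega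
      simp [e1, e2, ih]
  | box f ih =>
      rw [encode, ofNat]
      have e1 : (6 * encode f + 3) % 6 = 3 := by omega
      have e2 : (6 * encode f + 3) / 6 = encode f := by omega
      simp [e1, e2, ih]

theorem encode_ofNat : ∀ n : ℕ, encode (ofNat n) = n := by
  intro n
  induction n using Nat.strong_induction_on with
  | _ n ih =>
    rw [ofNat]
    by_cases h0 : n % 6 = 0
    · simp only [h0, dif_pos, encode]
      omega
    · have hn : 0 < n := Nat.pos_of_ne_zero (fun h => h0 (by simp [h]))
      have hd : n / 6 < n := Nat.div_lt_self hn (by norm_num)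
      have h1 : (n / 6).unpair.1 < n := lt_of_le_of_lt (Nat.unpair_left_le _) hd
      have h2 : (n / 6).unpair.2 < n := lt_of_le_of_lt (Nat.unpair_right_le _) hd
      rw [dif_neg h0]
      by_cases e1 : n % 6 = 1
      · rw [if_pos e1, encode, ih _ hd]; omega
      · rw [if_neg e1]
        by_cases e2 : n % 6 = 2
        · rw [if_pos e2, encode, ih _ hd]; omega
        · rw [if_neg e2]
          by_cases e3 : n % 6 = 3
          · rw [if_pos e3, encode, ih _ hd]; omega
          · rw [if_neg e3]
            by_cases e4 : n % 6 = 4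
            · rw [if_pos e4, encode, ih _ h1, ih _ h2, Nat.pair_unpair]; omega
            · rw [if_neg e4, encode, ih _ h1, ih _ h2, Nat.pair_unpair]; omega

/-- The canonical bijection between modal formulas and natural numbers. -/
def equivNat : ModalFormula ≃ ℕ := ⟨encode, ofNat, ofNat_encode, encode_ofNat⟩

/-- The canonical `Primcodable` instance induced by the canonical encoding. -/
instance : Primcodable ModalFormula := Primcodable.ofEquiv ℕ equivNat

end ModalFormula

/-- Local satisfaction of a modal formula at a world of a Kripke model `(W, R, π)`. -/
def Sat {W : Type*} (R : W → W → Prop) (π : W → ℕ → Prop) : W → ModalFormula → Prop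
  | w, .var n => π w n
  | w, .neg f => ¬ Sat R π w f
  | w, .and f g => Sat R π w f ∧ Sat R π w g
  | w, .or f g => Sat R π w f ∨ Sat R π w g
  | w, .dia f => ∃ v, R w v ∧ Sat R π v f
  | w, .box f => ∀ v, R w v → Sat R π v f

/-- Global satisfaction: `φ` holds at every world of the model. -/
def GlobalSat {W : Type*} (R : W → W → Prop) (π : W → ℕ → Prop) (φ : ModalFormula) : Prop :=
  ∀ w, Sat R π w φ

/-- `x` has at least `m` pairwise distinct `R`-successors. -/
def DegGe {W : Type*} (R : W → W → Prop) (m : ℕ) (x : W) : Prop :=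
  ∃ f : Fin m → W, Function.Injective f ∧ ∀ i, R x (f i)

/-- A world is ramified if it has at least `7` pairwise distinct successors. -/
def Ramified {W : Type*} (R : W → W → Prop) (x : W) : Prop := DegGe R 7 x

/-- The frame condition Γ. -/
def FrameGamma {W : Type*} (R : W → W → Prop) : Prop :=
  ∀ x y u z, R x y → R x u → R u z → DegGe R 2 x → DegGe R 4 u → DegGe R 2 z → R y z

/-- The frame condition Γ₁. -/
def FrameGamma1 {W : Type*} (R : W → W → Prop) : Prop :=
  (∃ v₁ v₂, Ramified R v₁ ∧ Ramified R v₂ ∧ v₁ ≠ v₂) →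
    (∀ x, ¬ R x x) ∧
    (∀ x y z, Ramified R x → R x y → R y z → R x z) ∧
    (∀ x y u z, R x y → R x u → R u z → DegGe R 2 x → DegGe R 4 u → DegGe R 2 z →
      R y z ∨ R x z)

/-- The frame condition Γ₂. -/
def FrameGamma2 {W : Type*} (R : W → W → Prop) : Prop :=
  (∀ x y z, Ramified R x → R x y → R y z → R x z) ∧
  ((∃ v, Ramified R v ∧ R v v) →
    ∀ x y u z, R x y → R x u → R u z → DegGe R 2 x → DegGe R 4 u → DegGe R 2 z →
      R y z ∨ R x z)

/-- The propositional variable `P_{ij}` (for `i, j ∈ {0,1,2}`). -/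
def Pv (i j : Fin 3) : ℕ := 3 * i.val + j.val

/-- The propositional variable `A_{ij}`. -/
def Av (i j : Fin 3) : ℕ := 9 + 3 * i.val + j.val

/-- The propositional variable `E^k_{ij}`. -/
def Ev (i j k : Fin 3) : ℕ := 18 + 9 * k.val + 3 * i.val + j.val

/-- The propositional variable `B_{ij}`. -/
def Bv (i j : Fin 3) : ℕ := 45 + 3 * i.val + j.val

/-- The propositional variable `F_{ij}`. -/
def Fv (i j : Fin 3) : ℕ := 54 + 3 * i.val + j.val

/-- The propositional variable `G^l_{ij}` (for `l ∈ {0,…,5}`). -/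
def Gv (i j : Fin 3) (l : Fin 6) : ℕ := 63 + 9 * l.val + 3 * i.val + j.val

/-- The propositional variable `P_d` associated with a domino piece `d`. -/
def Dv (d : ℕ) : ℕ := 117 + d

/-- `n` is one of the variables `P_{ij}`, `A_{ij}`, `E^k_{ij}`. -/
def IsTauVar (n : ℕ) : Prop :=
  (∃ i j, n = Pv i j) ∨ (∃ i j, n = Av i j) ∨ (∃ i j k, n = Ev i j k)

/-- `n` is one of the variables `P_{ij}`, `A_{ij}`, `E^k_{ij}`, `B_{ij}`, `F_{ij}`, `G^l_{ij}`. -/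
def IsTau1Var (n : ℕ) : Prop :=
  IsTauVar n ∨ (∃ i j, n = Bv i j) ∨ (∃ i j, n = Fv i j) ∨ (∃ i j l, n = Gv i j l)

/-- `n` is one of the variables `B_{ij}`, `F_{ij}`, `G^l_{ij}`. -/
def IsBFGVar (n : ℕ) : Prop :=
  (∃ i j, n = Bv i j) ∨ (∃ i j, n = Fv i j) ∨ (∃ i j l, n = Gv i j l)

/-- In the model `(R, π)`, the variable `q` is followed by the variables in `qs`:
every world satisfying `q` has a successor satisfying each member of `qs`, and all its
successors satisfy some member of `qs`. -/
def FollowedBy {W : Type*} (R : W → W → Prop) (π : W → ℕ → Prop) (q : ℕ) (qs : List ℕ) :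
    Prop :=
  ∀ w, π w q → (∀ s ∈ qs, ∃ v, R w v ∧ π v s) ∧ (∀ v, R w v → ∃ s ∈ qs, π v s)

/-- The property `τ` of a Kripke model. -/
def Tau {W : Type*} (R : W → W → Prop) (π : W → ℕ → Prop) : Prop :=
  (∀ w, ∃! n, IsTauVar n ∧ π w n) ∧
  (∀ i j, FollowedBy R π (Pv i j) [Pv (i + 1) j, Pv i (j + 1), Av i j]) ∧
  (∀ i j, FollowedBy R π (Av i j) [Pv (i + 1) (j + 1), Ev i j 0, Ev i j 1, Ev i j 2]) ∧
  (∀ i j k, FollowedBy R π (Ev i j k) [Av i j])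

/-- The property `τ₁` of a Kripke model. -/
def Tau1 {W : Type*} (R : W → W → Prop) (π : W → ℕ → Prop) : Prop :=
  (∀ w, ∃! n, IsTau1Var n ∧ π w n) ∧
  (∀ i j, FollowedBy R π (Pv i j) [Pv (i + 1) j, Pv i (j + 1), Av i j]) ∧
  (∀ i j, FollowedBy R π (Av i j)
    [Pv (i + 1) (j + 1), Fv i j, Ev i j 0, Ev i j 1, Ev i j 2]) ∧
  (∀ i j k, FollowedBy R π (Ev i j k) [Av i j]) ∧
  (∀ i j, FollowedBy R π (Fv i j) [Bv i j]) ∧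
  (∀ i j l, FollowedBy R π (Gv i j l) [Bv i j]) ∧
  (∀ i j w, π w (Bv i j) →
    (∃ v, R w v ∧ π v (Pv (i + 1) (j + 1))) ∧ ∀ l : Fin 6, ∃ v, R w v ∧ π v (Gv i j l))

/-- A domino system: a finite nonempty set of pieces (represented as `Fin k`) together with
horizontal and vertical adjacency relations. -/
structure DominoSystem where
  k : ℕ
  kpos : 0 < k
  H : Fin k → Fin k → Prop
  V : Fin k → Fin k → Prop

/-- The domino system tiles `ℕ × ℕ`. -/
def DominoSystem.TilesNat (DS : DominoSystem) : Prop :=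
  ∃ t : ℕ × ℕ → Fin DS.k, ∀ i j : ℕ,
    DS.H (t (i, j)) (t (i + 1, j)) ∧ DS.V (t (i, j)) (t (i, j + 1))

/-- The domino system tiles the torus `ℤ_m × ℤ_m` for some `m ≥ 1`
(addition on `Fin (m + 1)` is addition modulo `m + 1`). -/
def DominoSystem.TilesTorus (DS : DominoSystem) : Prop :=
  ∃ (m : ℕ) (t : Fin (m + 1) × Fin (m + 1) → Fin DS.k), ∀ i j : Fin (m + 1),
    DS.H (t (i, j)) (t (i + 1, j)) ∧ DS.V (t (i, j)) (t (i, j + 1))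

/-- The property `λ^𝒟` of a Kripke model, for a domino system `𝒟`. -/
def Lambda {W : Type*} (DS : DominoSystem) (R : W → W → Prop) (π : W → ℕ → Prop) : Prop :=
  (∀ w, (∃ i j, π w (Pv i j)) → ∃ d : Fin DS.k, π w (Dv d)) ∧
  (∀ (i j : Fin 3) (d : Fin DS.k) w, π w (Dv d) → π w (Pv i j) →
    ∀ v, R w v → π v (Pv (i + 1) j) → ∃ d', DS.H d d' ∧ π v (Dv d')) ∧
  (∀ (i j : Fin 3) (d : Fin DS.k) w, π w (Dv d) → π w (Pv i j) →
    ∀ v, R w v → π v (Pv i (j + 1)) → ∃ d', DS.V d d' ∧ π v (Dv d'))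

section GridAux

variable {W : Type} {R : W → W → Prop} {π : W → ℕ → Prop}

lemma isTauVar_Pv (i j : Fin 3) : IsTauVar (Pv i j) := Or.inl ⟨i, j, rfl⟩
lemma isTauVar_Av (i j : Fin 3) : IsTauVar (Av i j) := Or.inr (Or.inl ⟨i, j, rfl⟩)
lemma isTauVar_Ev (i j k : Fin 3) : IsTauVar (Ev i j k) := Or.inr (Or.inr ⟨i, j, k, rfl⟩)

lemma tau_unique (hT : Tau R π) {w : W} {m n : ℕ} (hm : IsTauVar m) (hn : IsTauVar n)
    (h1 : π w m) (h2 : π w n) : m = n := by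
  obtain ⟨k, _, hk⟩ := hT.1 w
  rw [hk m ⟨hm, h1⟩, hk n ⟨hn, h2⟩]

lemma degGe_of_vars (hT : Tau R π) {x : W} {n : ℕ} (f : Fin n → W) (g : Fin n → ℕ)
    (hR : ∀ s, R x (f s)) (hπ : ∀ s, π (f s) (g s)) (hv : ∀ s, IsTauVar (g s))
    (hinj : Function.Injective g) : DegGe R n x :=
  ⟨f, fun s t h => hinj (tau_unique hT (hv s) (hv t) (h ▸ hπ s) (hπ t)), hR⟩

lemma stepR (hT : Tau R π) {x : W} {i j : Fin 3} (hx : π x (Pv i j)) :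
    ∃ y, R x y ∧ π y (Pv (i + 1) j) :=
  ((hT.2.1 i j x hx).1 _ (by simp))

lemma square (hG : FrameGamma R) (hT : Tau R π) {x : W} {i j : Fin 3} (hx : π x (Pv i j)) :
    ∃ z, π z (Pv (i + 1) (j + 1)) ∧ ∀ v, R x v → R v z := by
  obtain ⟨hEx, -⟩ := hT.2.1 i j x hx
  obtain ⟨y1, hy1R, hy1⟩ := hEx (Pv (i + 1) j) (by simp)
  obtain ⟨u, huR, hu⟩ := hEx (Av i j) (by simp)
  obtain ⟨hExA, -⟩ := hT.2.2.1 i j u hu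
  obtain ⟨z, hzR, hz⟩ := hExA (Pv (i + 1) (j + 1)) (by simp)
  obtain ⟨e0, he0R, he0⟩ := hExA (Ev i j 0) (by simp)
  obtain ⟨e1, he1R, he1⟩ := hExA (Ev i j 1) (by simp)
  obtain ⟨e2, he2R, he2⟩ := hExA (Ev i j 2) (by simp)
  have hi := i.isLt
  have hj := j.isLt
  have hi1 := (i + 1).isLt
  have hj1 := (j + 1).isLt
  have degx : DegGe R 2 x := by
    refine degGe_of_vars hT ![y1, u] ![Pv (i + 1) j, Av i j] ?_ ?_ ?_ ?_
    · intro s; fin_cases s <;> simpa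
    · intro s; fin_cases s <;> simpa
    · intro s; fin_cases s
      · exact isTauVar_Pv _ _
      · exact isTauVar_Av _ _
    · intro s t h
      fin_cases s <;> fin_cases t <;> simp_all [Pv, Av] <;> omega
  have degu : DegGe R 4 u := by
    refine degGe_of_vars hT ![z, e0, e1, e2] ![Pv (i + 1) (j + 1), Ev i j 0, Ev i j 1, Ev i j 2]
      ?_ ?_ ?_ ?_
    · intro s; fin_cases s <;> simpa
    · intro s; fin_cases s <;> simpa
    · intro s; fin_cases s
      · exact isTauVar_Pv _ _
      · exact isTauVar_Ev _ _ _
      · exact isTauVar_Ev _ _ _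
      · exact isTauVar_Ev _ _ _
    · intro s t h
      fin_cases s <;> fin_cases t <;> simp_all [Pv, Ev] <;> omega
  obtain ⟨hExZ, -⟩ := hT.2.1 (i + 1) (j + 1) z hz
  obtain ⟨zy, hzyR, hzy⟩ := hExZ (Pv (i + 1 + 1) (j + 1)) (by simp)
  obtain ⟨za, hzaR, hza⟩ := hExZ (Av (i + 1) (j + 1)) (by simp)
  have degz : DegGe R 2 z := by
    refine degGe_of_vars hT ![zy, za] ![Pv (i + 1 + 1) (j + 1), Av (i + 1) (j + 1)] ?_ ?_ ?_ ?_
    · intro s; fin_cases s <;> simpa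
    · intro s; fin_cases s <;> simpa
    · intro s; fin_cases s
      · exact isTauVar_Pv _ _
      · exact isTauVar_Av _ _
    · intro s t h
      have := (i + 1 + 1).isLt
      fin_cases s <;> fin_cases t <;> simp_all [Pv, Av] <;> omega
  exact ⟨z, hz, fun v hv => hG x v u z hv huR hzR degx degu degz⟩

open Fin.NatCast in
lemma next_row (hG : FrameGamma R) (hT : Tau R π) (j : ℕ) (r : ℕ → W)
    (hP : ∀ i : ℕ, π (r i) (Pv (i : Fin 3) (j : Fin 3))) (hH : ∀ i, R (r i) (r (i + 1))) :
    ∃ r' : ℕ → W, (∀ i : ℕ, π (r' i) (Pv (i : Fin 3) ((j + 1 : ℕ) : Fin 3))) ∧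
      (∀ i, R (r' i) (r' (i + 1))) ∧ (∀ i, R (r i) (r' i)) := by
  have sq : ∀ i : ℕ, ∃ z, π z (Pv ((i : Fin 3) + 1) ((j : Fin 3) + 1)) ∧
      ∀ v, R (r i) v → R v z := fun i => square hG hT (hP i)
  choose z hz1 hz2 using sq
  obtain ⟨y0, hy0R, hy0⟩ := (hT.2.1 ((0 : ℕ) : Fin 3) (j : Fin 3) (r 0) (hP 0)).1
    (Pv ((0 : ℕ) : Fin 3) ((j : Fin 3) + 1)) (by simp)
  refine ⟨fun i => Nat.rec y0 (fun i _ => z i) i, ?_, ?_, ?_⟩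
  · intro i
    cases i with
    | zero => push_cast; exact hy0
    | succ i => push_cast; exact hz1 i
  · have hv : ∀ i, R (r i) (Nat.rec y0 (fun i _ => z i) i : W) := by
      intro i
      cases i with
      | zero => exact hy0R
      | succ i => exact hz2 i (r (i + 1)) (hH i)
    intro i
    exact hz2 i _ (hv i)
  · intro i
    cases i with
    | zero => exact hy0R
    | succ i => exact hz2 i (r (i + 1)) (hH i)

end GridAux

open Fin.NatCast in
/-- The standard infinite grid maps homomorphically into every model of Γ and `τ`
containing a world satisfying `P₀₀`. -/
theorem grid_maps_into_gamma_tau_model (W : Type) (R : W → W → Prop) (π : W → ℕ → Prop)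
    (hG : FrameGamma R) (hT : Tau R π) (h0 : ∃ w, π w (Pv 0 0)) :
    ∃ f : ℕ × ℕ → W, ∀ i j : ℕ,
      π (f (i, j)) (Pv (i : Fin 3) (j : Fin 3)) ∧
      R (f (i, j)) (f (i + 1, j)) ∧ R (f (i, j)) (f (i, j + 1)) := by
  obtain ⟨w0, hw0⟩ := h0
  -- base row
  have base : ∃ r : ℕ → W, (∀ i : ℕ, π (r i) (Pv (i : Fin 3) ((0 : ℕ) : Fin 3))) ∧
      ∀ i, R (r i) (r (i + 1)) := by
    choose F hF1 hF2 using
      fun (i : ℕ) (x : W) (hx : π x (Pv (i : Fin 3) ((0 : ℕ) : Fin 3))) => stepR hT hx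
    let r : ∀ i : ℕ, {x : W // π x (Pv (i : Fin 3) ((0 : ℕ) : Fin 3))} :=
      fun i => Nat.rec ⟨w0, by simpa using hw0⟩
        (fun i ih => ⟨F i ih.1 ih.2, by push_cast; exact hF2 i ih.1 ih.2⟩) i
    exact ⟨fun i => (r i).1, fun i => (r i).2, fun i => hF1 i (r i).1 (r i).2⟩
  obtain ⟨r0, hr0P, hr0H⟩ := base
  choose N hN1 hN2 hN3 using
    fun (j : ℕ) (r : ℕ → W) (h1 : ∀ i : ℕ, π (r i) (Pv (i : Fin 3) (j : Fin 3)))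
      (h2 : ∀ i, R (r i) (r (i + 1))) => next_row hG hT j r h1 h2
  let rows : ∀ j : ℕ, {r : ℕ → W //
      (∀ i : ℕ, π (r i) (Pv (i : Fin 3) (j : Fin 3))) ∧ ∀ i, R (r i) (r (i + 1))} :=
    fun j => Nat.rec ⟨r0, hr0P, hr0H⟩
      (fun j ih => ⟨N j ih.1 ih.2.1 ih.2.2,
        hN1 j ih.1 ih.2.1 ih.2.2, hN2 j ih.1 ih.2.1 ih.2.2⟩) j
  refine ⟨fun p => (rows p.2).1 p.1, fun i j => ⟨(rows j).2.1 i, (rows j).2.2 i, ?_⟩⟩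
  exact hN3 j (rows j).1 (rows j).2.1 (rows j).2.2 i
end

section
/- Every Kripke model that globally satisfies τ has an anti-transitive frame: for all worlds x, u, z, if R x u and R u z then ¬ R x z. -/
/-- Every Kripke model globally satisfying `τ` has an anti-transitive frame. -/
theorem tau_model_antitransitive (W : Type) (R : W → W → Prop) (π : W → ℕ → Prop)
    (hT : Tau R π) :
    ∀ x u z, R x u → R u z → ¬ R x z := by
  obtain ⟨huniq, hP, hA, hE⟩ := hT
  intro x u z hxu huz hxz
  have key : ∀ (w : W) (a b : ℕ), IsTauVar a → IsTauVar b → π w a → π w b → a = b := by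
    intro w a b ha hb hpa hpb
    obtain ⟨n, -, hn⟩ := huniq w
    exact (hn a ⟨ha, hpa⟩).trans (hn b ⟨hb, hpb⟩).symm
  obtain ⟨nx, ⟨hvx, hpx⟩, -⟩ := huniq x
  rcases hvx with ⟨i, j, rfl⟩ | ⟨i, j, rfl⟩ | ⟨i, j, k, rfl⟩
  · obtain ⟨-, hsx⟩ := hP i j x hpx
    obtain ⟨su, hsu, hpu⟩ := hsx u hxu
    obtain ⟨sz, hsz, hpz⟩ := hsx z hxz
    simp only [List.mem_cons, List.not_mem_nil, or_false] at hsu hsz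
    have hi := i.isLt; have hj := j.isLt
    rcases hsu with rfl | rfl | rfl
    · obtain ⟨-, hsu2⟩ := hP (i + 1) j u hpu
      obtain ⟨tz, htz, hpz2⟩ := hsu2 z huz
      simp only [List.mem_cons, List.not_mem_nil, or_false] at htz
      rcases htz with rfl | rfl | rfl <;> rcases hsz with rfl | rfl | rfl <;>
      · have heq := key z _ _
          (by first
            | exact Or.inl ⟨_, _, rfl⟩
            | exact Or.inr (Or.inl ⟨_, _, rfl⟩)
            | exact Or.inr (Or.inr ⟨_, _, _, rfl⟩))
          (by first
            | exact Or.inl ⟨_, _, rfl⟩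
            | exact Or.inr (Or.inl ⟨_, _, rfl⟩)
            | exact Or.inr (Or.inr ⟨_, _, _, rfl⟩)) hpz2 hpz
        simp only [Pv, Av, Ev, Fin.val_add, Fin.val_one, Fin.val_zero] at heq
        omega
    · obtain ⟨-, hsu2⟩ := hP i (j + 1) u hpu
      obtain ⟨tz, htz, hpz2⟩ := hsu2 z huz
      simp only [List.mem_cons, List.not_mem_nil, or_false] at htz
      rcases htz with rfl | rfl | rfl <;> rcases hsz with rfl | rfl | rfl <;>
      · have heq := key z _ _
          (by first
            | exact Or.inl ⟨_, _, rfl⟩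
            | exact Or.inr (Or.inl ⟨_, _, rfl⟩)
            | exact Or.inr (Or.inr ⟨_, _, _, rfl⟩))
          (by first
            | exact Or.inl ⟨_, _, rfl⟩
            | exact Or.inr (Or.inl ⟨_, _, rfl⟩)
            | exact Or.inr (Or.inr ⟨_, _, _, rfl⟩)) hpz2 hpz
        simp only [Pv, Av, Ev, Fin.val_add, Fin.val_one, Fin.val_zero] at heq
        omega
    · obtain ⟨-, hsu2⟩ := hA i j u hpu
      obtain ⟨tz, htz, hpz2⟩ := hsu2 z huz
      simp only [List.mem_cons, List.not_mem_nil, or_false] at htz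
      rcases htz with rfl | rfl | rfl | rfl <;> rcases hsz with rfl | rfl | rfl <;>
      · have heq := key z _ _
          (by first
            | exact Or.inl ⟨_, _, rfl⟩
            | exact Or.inr (Or.inl ⟨_, _, rfl⟩)
            | exact Or.inr (Or.inr ⟨_, _, _, rfl⟩))
          (by first
            | exact Or.inl ⟨_, _, rfl⟩
            | exact Or.inr (Or.inl ⟨_, _, rfl⟩)
            | exact Or.inr (Or.inr ⟨_, _, _, rfl⟩)) hpz2 hpz
        simp only [Pv, Av, Ev, Fin.val_add, Fin.val_one, Fin.val_zero] at heq
        omega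
  · obtain ⟨-, hsx⟩ := hA i j x hpx
    obtain ⟨su, hsu, hpu⟩ := hsx u hxu
    obtain ⟨sz, hsz, hpz⟩ := hsx z hxz
    simp only [List.mem_cons, List.not_mem_nil, or_false] at hsu hsz
    have hi := i.isLt; have hj := j.isLt
    rcases hsu with rfl | rfl | rfl | rfl
    · obtain ⟨-, hsu2⟩ := hP (i + 1) (j + 1) u hpu
      obtain ⟨tz, htz, hpz2⟩ := hsu2 z huz
      simp only [List.mem_cons, List.not_mem_nil, or_false] at htz
      rcases htz with rfl | rfl | rfl <;> rcases hsz with rfl | rfl | rfl | rfl <;>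
      · have heq := key z _ _
          (by first
            | exact Or.inl ⟨_, _, rfl⟩
            | exact Or.inr (Or.inl ⟨_, _, rfl⟩)
            | exact Or.inr (Or.inr ⟨_, _, _, rfl⟩))
          (by first
            | exact Or.inl ⟨_, _, rfl⟩
            | exact Or.inr (Or.inl ⟨_, _, rfl⟩)
            | exact Or.inr (Or.inr ⟨_, _, _, rfl⟩)) hpz2 hpz
        simp only [Pv, Av, Ev, Fin.val_add, Fin.val_one, Fin.val_zero] at heq
        omega
    all_goals {
      obtain ⟨-, hsu2⟩ := hE i j _ u hpu
      obtain ⟨tz, htz, hpz2⟩ := hsu2 z huz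
      simp only [List.mem_cons, List.not_mem_nil, or_false] at htz
      subst htz
      rcases hsz with rfl | rfl | rfl | rfl <;>
      · have heq := key z _ _
          (by first
            | exact Or.inl ⟨_, _, rfl⟩
            | exact Or.inr (Or.inl ⟨_, _, rfl⟩)
            | exact Or.inr (Or.inr ⟨_, _, _, rfl⟩))
          (by first
            | exact Or.inl ⟨_, _, rfl⟩
            | exact Or.inr (Or.inl ⟨_, _, rfl⟩)
            | exact Or.inr (Or.inr ⟨_, _, _, rfl⟩)) hpz2 hpz
        simp only [Pv, Av, Ev, Fin.val_add, Fin.val_one, Fin.val_zero] at heq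
        omega }
  · obtain ⟨-, hsx⟩ := hE i j k x hpx
    obtain ⟨su, hsu, hpu⟩ := hsx u hxu
    obtain ⟨sz, hsz, hpz⟩ := hsx z hxz
    simp only [List.mem_cons, List.not_mem_nil, or_false] at hsu hsz
    have hi := i.isLt; have hj := j.isLt
    subst hsu; subst hsz
    obtain ⟨-, hsu2⟩ := hA i j u hpu
    obtain ⟨tz, htz, hpz2⟩ := hsu2 z huz
    simp only [List.mem_cons, List.not_mem_nil, or_false] at htz
    rcases htz with rfl | rfl | rfl | rfl <;>
    · have heq := key z _ _
        (by first
          | exact Or.inl ⟨_, _, rfl⟩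
          | exact Or.inr (Or.inl ⟨_, _, rfl⟩)
          | exact Or.inr (Or.inr ⟨_, _, _, rfl⟩))
        (by first
          | exact Or.inl ⟨_, _, rfl⟩
          | exact Or.inr (Or.inl ⟨_, _, rfl⟩)
          | exact Or.inr (Or.inr ⟨_, _, _, rfl⟩)) hpz2 hpz
      simp only [Pv, Av, Ev, Fin.val_add, Fin.val_one, Fin.val_zero] at heq
      omega
end

section
/- The finite global Γ₁-satisfiability problem for modal logic is decidable: the predicate on modal formulas φ asserting that φ is globally satisfied in some Kripke model with nonempty finite universe W ⊆ ℕ whose frame satisfies Γ₁ is computable. -/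
/-- The global Γ-satisfiability problem: `φ` is globally satisfied in some Kripke model
with nonempty universe `W ⊆ ℕ` whose frame satisfies Γ. -/
def GSatGamma (φ : ModalFormula) : Prop :=
  ∃ (W : Set ℕ) (R : W → W → Prop) (π : W → ℕ → Prop),
    W.Nonempty ∧ FrameGamma R ∧ GlobalSat R π φ

/-- The finite global Γ-satisfiability problem. -/
def FinGSatGamma (φ : ModalFormula) : Prop :=
  ∃ (W : Set ℕ) (R : W → W → Prop) (π : W → ℕ → Prop),
    W.Nonempty ∧ W.Finite ∧ FrameGamma R ∧ GlobalSat R π φ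

/-- The global Γ₁-satisfiability problem. -/
def GSatGamma1 (φ : ModalFormula) : Prop :=
  ∃ (W : Set ℕ) (R : W → W → Prop) (π : W → ℕ → Prop),
    W.Nonempty ∧ FrameGamma1 R ∧ GlobalSat R π φ

/-- The finite global Γ₁-satisfiability problem. -/
def FinGSatGamma1 (φ : ModalFormula) : Prop :=
  ∃ (W : Set ℕ) (R : W → W → Prop) (π : W → ℕ → Prop),
    W.Nonempty ∧ W.Finite ∧ FrameGamma1 R ∧ GlobalSat R π φ

/-- The global Γ₂-satisfiability problem. -/
def GSatGamma2 (φ : ModalFormula) : Prop :=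
  ∃ (W : Set ℕ) (R : W → W → Prop) (π : W → ℕ → Prop),
    W.Nonempty ∧ FrameGamma2 R ∧ GlobalSat R π φ

/-- The finite global Γ₂-satisfiability problem. -/
def FinGSatGamma2 (φ : ModalFormula) : Prop :=
  ∃ (W : Set ℕ) (R : W → W → Prop) (π : W → ℕ → Prop),
    W.Nonempty ∧ W.Finite ∧ FrameGamma2 R ∧ GlobalSat R π φ

set_option linter.dupNamespace false
namespace G1Dec


def nfold {σ : Type*} (z : σ) (g : ℕ → σ → σ) : ℕ → σ
  | 0 => z
  | n+1 => g n (nfold z g n)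

theorem primrec_nfold {α σ : Type*} [Primcodable α] [Primcodable σ]
    {z : α → σ} {g : α → ℕ → σ → σ} {n : α → ℕ}
    (hz : Primrec z) (hg : Primrec fun p : α × ℕ × σ => g p.1 p.2.1 p.2.2)
    (hn : Primrec n) :
    Primrec fun a => nfold (z a) (g a) (n a) := by
  have h := Primrec.nat_rec' (h := fun a (p : ℕ × σ) => g a p.1 p.2) hn hz hg
  refine h.of_eq fun a => ?_
  induction n a with
  | zero => rfl
  | succ k ih => simp [nfold, ih]

def bitv (j x : ℕ) : Bool := decide (x / 2 ^ j % 2 = 1)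

def ofBits (f : ℕ → Bool) (n : ℕ) : ℕ :=
  nfold 0 (fun s acc => acc + if f s then 2 ^ s else 0) n

theorem ofBits_succ (f : ℕ → Bool) (n : ℕ) :
    ofBits f (n + 1) = ofBits f n + if f n then 2 ^ n else 0 := rfl

def anyb (f : ℕ → Bool) (n : ℕ) : Bool := nfold false (fun s acc => acc || f s) n

def allb (f : ℕ → Bool) (n : ℕ) : Bool := nfold true (fun s acc => acc && f s) n

def cntb (f : ℕ → Bool) (n : ℕ) : ℕ :=
  nfold 0 (fun s acc => acc + if f s then 1 else 0) n

theorem ofBits_lt (f : ℕ → Bool) (n : ℕ) : ofBits f n < 2 ^ n := by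
  induction n with
  | zero => simp [ofBits, nfold]
  | succ k ih =>
    have h2 : 2 ^ (k+1) = 2 ^ k + 2 ^ k := by ring
    rw [ofBits_succ]
    by_cases h : f k <;> simp [h] <;> omega

theorem bitv_ofBits {f : ℕ → Bool} {n j : ℕ} (h : j < n) : bitv j (ofBits f n) = f j := by
  induction n with
  | zero => omega
  | succ k ih =>
    rw [ofBits_succ]
    rcases Nat.lt_succ_iff_lt_or_eq.mp h with h' | h'
    · have hd : 2 ^ j ∣ (if f k then 2 ^ k else 0) := by
        by_cases hf : f k <;> simp [hf, pow_dvd_pow _ (le_of_lt h')]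
      obtain ⟨c, hc⟩ := hd
      have h2 : 2 ∣ c := by
        by_cases hf : f k <;> simp [hf] at hc
        · have : 2 ^ k = 2 ^ j * (2 ^ (k - j)) := by
            rw [← pow_add]; congr 1; omega
          rw [this] at hc
          have hcc : c = 2 ^ (k - j) := by
            have := Nat.pow_pos (n := j) (by norm_num : 0 < 2)
            exact (Nat.eq_of_mul_eq_mul_left this hc.symm)
          rw [hcc]
          exact dvd_pow_self 2 (by omega)
        · have : c = 0 := by
            have := Nat.pow_pos (n := j) (by norm_num : 0 < 2)
            nlinarith [hc.symm]
          simp [this]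
      obtain ⟨d, hd⟩ := h2
      unfold bitv
      rw [hc, hd, Nat.add_mul_div_left _ _ (Nat.pow_pos (n := j) (by norm_num)),
        show 2 * d = d * 2 by ring, Nat.add_mul_mod_self_right]
      exact ih h'
    · subst h'
      have hx := ofBits_lt f j
      unfold bitv
      by_cases hf : f j <;> simp only [hf, if_true, if_false]
      · rw [show ofBits f j + 2 ^ j = ofBits f j + 1 * 2 ^ j by ring,
          Nat.add_mul_div_right _ _ (Nat.pow_pos (n := j) (by norm_num)),
          Nat.div_eq_of_lt hx]
        simp
      · simp only [if_false, Bool.false_eq_true, add_zero]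
        rw [Nat.div_eq_of_lt hx]
        simp

theorem bitv_eq_false {x s j : ℕ} (hx : x < 2 ^ s) (hj : s ≤ j) : bitv j x = false := by
  unfold bitv
  rw [Nat.div_eq_of_lt (lt_of_lt_of_le hx (Nat.pow_le_pow_right (by norm_num) hj))]
  simp

theorem anyb_iff {f : ℕ → Bool} {n : ℕ} : anyb f n = true ↔ ∃ k, k < n ∧ f k = true := by
  induction n with
  | zero => simp [anyb, nfold]
  | succ k ih =>
    simp only [anyb, nfold, Bool.or_eq_true] at ih ⊢
    constructor
    · rintro (h | h)
      · obtain ⟨j, hj, hf⟩ := ih.mp h; exact ⟨j, by omega, hf⟩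
      · exact ⟨k, by omega, h⟩
    · rintro ⟨j, hj, hf⟩
      rcases Nat.lt_succ_iff_lt_or_eq.mp hj with h' | h'
      · exact Or.inl (ih.mpr ⟨j, h', hf⟩)
      · subst h'; exact Or.inr hf

theorem allb_iff {f : ℕ → Bool} {n : ℕ} : allb f n = true ↔ ∀ k, k < n → f k = true := by
  induction n with
  | zero => simp [allb, nfold]
  | succ k ih =>
    simp only [allb, nfold, Bool.and_eq_true] at ih ⊢
    constructor
    · rintro ⟨h1, h2⟩ j hj
      rcases Nat.lt_succ_iff_lt_or_eq.mp hj with h' | h'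
      · exact ih.mp h1 j h'
      · subst h'; exact h2
    · intro h
      exact ⟨ih.mpr fun j hj => h j (by omega), h k (by omega)⟩

theorem cntb_eq_card (f : ℕ → Bool) (n : ℕ) :
    cntb f n = ((Finset.range n).filter fun k => f k = true).card := by
  induction n with
  | zero => simp [cntb, nfold]
  | succ k ih =>
    have hstep : cntb f (k + 1) = cntb f k + if f k then 1 else 0 := rfl
    rw [hstep, Finset.range_add_one, Finset.filter_insert, ih]
    by_cases hf : f k
    · rw [if_pos hf, if_pos hf, Finset.card_insert_of_notMem (by simp)]
    · rw [if_neg hf, if_neg hf, add_zero]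


/-! ### Coded models -/

def Rb (n r x y : ℕ) : Bool := bitv (x * n + y) r

def Pb (v V w i : ℕ) : Bool := bitv (w * V + i) v

def TC (n r v V : ℕ) (m : ℕ) : ℕ :=
  if _h0 : m % 6 = 0 then ofBits (fun w => Pb v V w (m / 6)) n
  else
    have hn : 0 < m := Nat.pos_of_ne_zero (fun h => _h0 (by simp [h]))
    have hd : m / 6 < m := Nat.div_lt_self hn (by norm_num)
    have h1 : (m / 6).unpair.1 < m := lt_of_le_of_lt (Nat.unpair_left_le _) hd
    have h2 : (m / 6).unpair.2 < m := lt_of_le_of_lt (Nat.unpair_right_le _) hd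
    if m % 6 = 1 then ofBits (fun w => ! bitv w (TC n r v V (m / 6))) n
    else if m % 6 = 2 then
      ofBits (fun w => anyb (fun y => Rb n r w y && bitv y (TC n r v V (m / 6))) n) n
    else if m % 6 = 3 then
      ofBits (fun w => allb (fun y => !Rb n r w y || bitv y (TC n r v V (m / 6))) n) n
    else if m % 6 = 4 then
      ofBits (fun w => bitv w (TC n r v V (m / 6).unpair.1)
        && bitv w (TC n r v V (m / 6).unpair.2)) n
    else
      ofBits (fun w => bitv w (TC n r v V (m / 6).unpair.1)
        || bitv w (TC n r v V (m / 6).unpair.2)) n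
  termination_by m
  decreasing_by all_goals assumption

def Wset (n : ℕ) : Set ℕ := {m | m < n}

def Rk (n r : ℕ) (x y : Wset n) : Prop := Rb n r x.1 y.1 = true

def Pk (n v V : ℕ) (w : Wset n) (i : ℕ) : Prop := Pb v V w.1 i = true

theorem TC_correct (n r v V : ℕ) (f : ModalFormula) (w : ℕ) (hw : w < n) :
    (bitv w (TC n r v V (ModalFormula.encode f)) = true ↔
      Sat (Rk n r) (Pk n v V) ⟨w, hw⟩ f) := by
  induction f generalizing w with
  | var i =>
    rw [ModalFormula.encode, TC, dif_pos (by omega : 6 * i % 6 = 0),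
      Nat.mul_div_cancel_left _ (by norm_num : (0:ℕ) < 6), bitv_ofBits hw]
    exact Iff.rfl
  | neg f ih =>
    rw [ModalFormula.encode, TC]
    have e1 : (6 * ModalFormula.encode f + 1) % 6 = 1 := by omega
    have e2 : (6 * ModalFormula.encode f + 1) / 6 = ModalFormula.encode f := by omega
    rw [dif_neg (by omega)]
    simp only [e1, e2, reduceIte]
    rw [bitv_ofBits hw]
    simp only [Bool.not_eq_true', Sat]
    rw [← ih w hw]
    simp
  | and f g ihf ihg =>
    rw [ModalFormula.encode, TC]
    have e1 : (6 * Nat.pair (ModalFormula.encode f) (ModalFormula.encode g) + 4) % 6 = 4 := by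
      omega
    have e2 : (6 * Nat.pair (ModalFormula.encode f) (ModalFormula.encode g) + 4) / 6
        = Nat.pair (ModalFormula.encode f) (ModalFormula.encode g) := by omega
    rw [dif_neg (by omega)]
    simp only [e1, e2, reduceIte, Nat.unpair_pair]
    norm_num
    rw [bitv_ofBits hw]
    simp only [Bool.and_eq_true, Sat]
    rw [ihf w hw, ihg w hw]
  | or f g ihf ihg =>
    rw [ModalFormula.encode, TC]
    have e1 : (6 * Nat.pair (ModalFormula.encode f) (ModalFormula.encode g) + 5) % 6 = 5 := by
      omega
    have e2 : (6 * Nat.pair (ModalFormula.encode f) (ModalFormula.encode g) + 5) / 6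
        = Nat.pair (ModalFormula.encode f) (ModalFormula.encode g) := by omega
    rw [dif_neg (by omega)]
    simp only [e1, e2, reduceIte, Nat.unpair_pair]
    norm_num
    rw [bitv_ofBits hw]
    simp only [Bool.or_eq_true, Sat]
    rw [ihf w hw, ihg w hw]
  | dia f ih =>
    rw [ModalFormula.encode, TC]
    have e1 : (6 * ModalFormula.encode f + 2) % 6 = 2 := by omega
    have e2 : (6 * ModalFormula.encode f + 2) / 6 = ModalFormula.encode f := by omega
    rw [dif_neg (by omega)]
    simp only [e1, e2, reduceIte]
    norm_num
    rw [bitv_ofBits hw, anyb_iff]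
    constructor
    · rintro ⟨y, hy, hb⟩
      rw [Bool.and_eq_true] at hb
      exact ⟨⟨y, hy⟩, hb.1, (ih y hy).mp hb.2⟩
    · rintro ⟨⟨y, hy⟩, hr, hs⟩
      exact ⟨y, hy, by rw [Bool.and_eq_true]; exact ⟨hr, (ih y hy).mpr hs⟩⟩
  | box f ih =>
    rw [ModalFormula.encode, TC]
    have e1 : (6 * ModalFormula.encode f + 3) % 6 = 3 := by omega
    have e2 : (6 * ModalFormula.encode f + 3) / 6 = ModalFormula.encode f := by omega
    rw [dif_neg (by omega)]
    simp only [e1, e2, reduceIte]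
    norm_num
    rw [bitv_ofBits hw, allb_iff]
    constructor
    · rintro h ⟨y, hy⟩ hr
      have := h y hy
      rw [Bool.or_eq_true, Bool.not_eq_true'] at this
      rcases this with h' | h'
      · rw [show Rk n r ⟨w, hw⟩ ⟨y, hy⟩ = (Rb n r w y = true) from rfl] at hr
        rw [hr] at h'; cases h'
      · exact (ih y hy).mp h'
    · intro h y hy
      rw [Bool.or_eq_true, Bool.not_eq_true']
      by_cases hr : Rb n r w y = true
      · exact Or.inr ((ih y hy).mpr (h ⟨y, hy⟩ hr))
      · exact Or.inl (by simpa using hr)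

/-! ### Degree and Γ₁ checks on coded models -/

def degb (n r x : ℕ) : ℕ := cntb (fun y => Rb n r x y) n

def ramb (n r x : ℕ) : Bool := decide (7 ≤ degb n r x)

theorem degGe_iff (n r m x : ℕ) (hx : x < n) :
    DegGe (Rk n r) m ⟨x, hx⟩ ↔ m ≤ degb n r x := by
  have hcard : degb n r x = ((Finset.range n).filter fun y => Rb n r x y = true).card :=
    cntb_eq_card _ _
  constructor
  · rintro ⟨f, finj, hf⟩
    rw [hcard]
    have hsub : (Finset.univ.image fun i => (f i).1) ⊆
        (Finset.range n).filter fun y => Rb n r x y = true := by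
      intro a ha
      simp only [Finset.mem_image] at ha
      obtain ⟨i, _, rfl⟩ := ha
      simp only [Finset.mem_filter, Finset.mem_range]
      exact ⟨(f i).2, hf i⟩
    calc m = (Finset.univ : Finset (Fin m)).card := by simp
    _ = (Finset.univ.image fun i => (f i).1).card := by
        rw [Finset.card_image_of_injective _ ?_]
        intro i j hij
        exact finj (Subtype.ext hij)
    _ ≤ _ := Finset.card_le_card hsub
  · intro hm
    rw [hcard] at hm
    set F := (Finset.range n).filter fun y => Rb n r x y = true with hF
    have hlen : F.toList.length = F.card := Finset.length_toList F
    have hmem : ∀ j (hj : j < F.toList.length), F.toList.get ⟨j, hj⟩ ∈ F := by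
      intro j hj
      rw [← Finset.mem_toList]
      exact List.get_mem _ _
    have hprop : ∀ j (hj : j < F.toList.length),
        F.toList.get ⟨j, hj⟩ < n ∧ Rb n r x (F.toList.get ⟨j, hj⟩) = true := by
      intro j hj
      have := hmem j hj
      simp only [hF, Finset.mem_filter, Finset.mem_range] at this
      exact this
    refine ⟨fun i => ⟨F.toList.get ⟨i.1, by omega⟩, (hprop i.1 (by omega)).1⟩, ?_, ?_⟩
    · intro i j hij
      have h2 := F.nodup_toList
      have hval : F.toList.get ⟨i.1, by omega⟩ = F.toList.get ⟨j.1, by omega⟩ :=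
        congrArg Subtype.val hij
      have := (List.Nodup.get_inj_iff h2).mp hval
      exact Fin.ext (by simpa using congrArg Fin.val this)
    · intro i
      exact (hprop i.1 (by omega)).2

theorem ramb_iff (n r x : ℕ) (hx : x < n) :
    Ramified (Rk n r) ⟨x, hx⟩ ↔ ramb n r x = true := by
  rw [Ramified, degGe_iff n r 7 x hx, ramb, decide_eq_true_iff]

def checkIrr (n r : ℕ) : Bool := allb (fun x => ! Rb n r x x) n

def checkTrig (n r : ℕ) : Bool :=
  anyb (fun x => ramb n r x && anyb (fun y => ramb n r y && ! (x == y)) n) n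

def checkB2 (n r : ℕ) : Bool :=
  allb (fun x => !ramb n r x ||
    allb (fun y => !Rb n r x y ||
      allb (fun z => !Rb n r y z || Rb n r x z) n) n) n

def checkC (n r : ℕ) : Bool :=
  allb (fun x => allb (fun y => allb (fun u => allb (fun z =>
    !(Rb n r x y && Rb n r x u && Rb n r u z && decide (2 ≤ degb n r x)
        && decide (4 ≤ degb n r u) && decide (2 ≤ degb n r z))
      || (Rb n r y z || Rb n r x z)) n) n) n) n

def checkG1 (n r : ℕ) : Bool := !checkTrig n r || (checkIrr n r && checkB2 n r && checkC n r)

theorem checkG1_iff (n r : ℕ) : checkG1 n r = true ↔ FrameGamma1 (Rk n r) := by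
  have htrig : checkTrig n r = true ↔
      (∃ v₁ v₂, Ramified (Rk n r) v₁ ∧ Ramified (Rk n r) v₂ ∧ v₁ ≠ v₂) := by
    rw [checkTrig, anyb_iff]
    constructor
    · rintro ⟨x, hx, hb⟩
      rw [Bool.and_eq_true, anyb_iff] at hb
      obtain ⟨h1, y, hy, hb2⟩ := hb
      rw [Bool.and_eq_true, Bool.not_eq_true', beq_eq_false_iff_ne] at hb2
      exact ⟨⟨x, hx⟩, ⟨y, hy⟩, (ramb_iff n r x hx).mpr h1, (ramb_iff n r y hy).mpr hb2.1,
        fun h => hb2.2 (congrArg Subtype.val h)⟩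
    · rintro ⟨⟨x, hx⟩, ⟨y, hy⟩, h1, h2, hne⟩
      refine ⟨x, hx, ?_⟩
      rw [Bool.and_eq_true, anyb_iff]
      refine ⟨(ramb_iff n r x hx).mp h1, y, hy, ?_⟩
      rw [Bool.and_eq_true, Bool.not_eq_true', beq_eq_false_iff_ne]
      exact ⟨(ramb_iff n r y hy).mp h2, fun h => hne (Subtype.ext h)⟩
  have hirr : checkIrr n r = true ↔ (∀ x, ¬ Rk n r x x) := by
    rw [checkIrr, allb_iff]
    constructor
    · rintro h ⟨x, hx⟩ hr
      have := h x hx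
      rw [Bool.not_eq_true'] at this
      rw [Rk, this] at hr; cases hr
    · intro h x hx
      rw [Bool.not_eq_true']
      by_cases hr : Rb n r x x = true
      · exact absurd hr (h ⟨x, hx⟩)
      · simpa using hr
  have hb2 : checkB2 n r = true ↔
      (∀ x y z, Ramified (Rk n r) x → Rk n r x y → Rk n r y z → Rk n r x z) := by
    rw [checkB2, allb_iff]
    constructor
    · rintro h ⟨x, hx⟩ ⟨y, hy⟩ ⟨z, hz⟩ hram hxy hyz
      have := h x hx
      rw [Bool.or_eq_true, Bool.not_eq_true'] at this
      rcases this with h' | h'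
      · rw [(ramb_iff n r x hx).mp hram] at h'; cases h'
      · rw [allb_iff] at h'
        have := h' y hy
        rw [Bool.or_eq_true, Bool.not_eq_true'] at this
        rcases this with h'' | h''
        · rw [Rk] at hxy; rw [hxy] at h''; cases h''
        · rw [allb_iff] at h''
          have := h'' z hz
          rw [Bool.or_eq_true, Bool.not_eq_true'] at this
          rcases this with h3 | h3
          · rw [Rk] at hyz; rw [hyz] at h3; cases h3
          · exact h3
    · intro h x hx
      rw [Bool.or_eq_true, Bool.not_eq_true']
      by_cases hram : ramb n r x = true
      · refine Or.inr ?_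
        rw [allb_iff]
        intro y hy
        rw [Bool.or_eq_true, Bool.not_eq_true']
        by_cases hxy : Rb n r x y = true
        · refine Or.inr ?_
          rw [allb_iff]
          intro z hz
          rw [Bool.or_eq_true, Bool.not_eq_true']
          by_cases hyz : Rb n r y z = true
          · exact Or.inr (h ⟨x, hx⟩ ⟨y, hy⟩ ⟨z, hz⟩ ((ramb_iff n r x hx).mpr hram) hxy hyz)
          · exact Or.inl (by simpa using hyz)
        · exact Or.inl (by simpa using hxy)
      · exact Or.inl (by simpa using hram)
  have hc : checkC n r = true ↔
      (∀ x y u z, Rk n r x y → Rk n r x u → Rk n r u z → DegGe (Rk n r) 2 x →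
        DegGe (Rk n r) 4 u → DegGe (Rk n r) 2 z → Rk n r y z ∨ Rk n r x z) := by
    rw [checkC, allb_iff]
    constructor
    · rintro h ⟨x, hx⟩ ⟨y, hy⟩ ⟨u, hu⟩ ⟨z, hz⟩ hxy hxu huz d1 d2 d3
      have h1 := h x hx
      rw [allb_iff] at h1
      have h2 := h1 y hy
      rw [allb_iff] at h2
      have h3 := h2 u hu
      rw [allb_iff] at h3
      have h4 := h3 z hz
      rw [Bool.or_eq_true, Bool.or_eq_true, Bool.not_eq_true'] at h4
      rcases h4 with h' | h'
      · exfalso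
        have hxy' : Rb n r x y = true := hxy
        have hxu' : Rb n r x u = true := hxu
        have huz' : Rb n r u z = true := huz
        have e1 : (2:ℕ) ≤ degb n r x := (degGe_iff n r 2 x hx).mp d1
        have e2 : (4:ℕ) ≤ degb n r u := (degGe_iff n r 4 u hu).mp d2
        have e3 : (2:ℕ) ≤ degb n r z := (degGe_iff n r 2 z hz).mp d3
        simp [hxy', hxu', huz', e1, e2, e3] at h'
      · exact h'
    · intro h x hx
      rw [allb_iff]
      intro y hy
      rw [allb_iff]
      intro u hu
      rw [allb_iff]
      intro z hz
      rw [Bool.or_eq_true, Bool.or_eq_true, Bool.not_eq_true']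
      by_cases hcond : (Rb n r x y && Rb n r x u && Rb n r u z && decide (2 ≤ degb n r x)
        && decide (4 ≤ degb n r u) && decide (2 ≤ degb n r z)) = true
      · simp only [Bool.and_eq_true, decide_eq_true_iff] at hcond
        obtain ⟨⟨⟨⟨⟨hxy, hxu⟩, huz⟩, d1⟩, d2⟩, d3⟩ := hcond
        exact Or.inr (h ⟨x, hx⟩ ⟨y, hy⟩ ⟨u, hu⟩ ⟨z, hz⟩ hxy hxu huz
          ((degGe_iff n r 2 x hx).mpr d1) ((degGe_iff n r 4 u hu).mpr d2)
          ((degGe_iff n r 2 z hz).mpr d3))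
      · exact Or.inl (by simpa using hcond)
  rw [checkG1, FrameGamma1, Bool.or_eq_true, Bool.not_eq_true']
  constructor
  · intro h htr
    rcases h with h' | h'
    · exact absurd (htrig.mpr htr) (by simp [h'])
    · rw [Bool.and_eq_true, Bool.and_eq_true] at h'
      exact ⟨hirr.mp h'.1.1, hb2.mp h'.1.2, hc.mp h'.2⟩
  · intro h
    by_cases htr : checkTrig n r = true
    · obtain ⟨h1, h2, h3⟩ := h (htrig.mp htr)
      refine Or.inr ?_
      rw [Bool.and_eq_true, Bool.and_eq_true]
      exact ⟨⟨hirr.mpr h1, hb2.mpr h2⟩, hc.mpr h3⟩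
    · exact Or.inl (by simpa using htr)
/-! ### Abstract model-theoretic lemmas -/

def maxv : ModalFormula → ℕ
  | .var n => n
  | .neg f => maxv f
  | .and f g => max (maxv f) (maxv g)
  | .or f g => max (maxv f) (maxv g)
  | .dia f => maxv f
  | .box f => maxv f

theorem maxv_le_encode (f : ModalFormula) : maxv f ≤ ModalFormula.encode f := by
  induction f with
  | var n => simp [maxv, ModalFormula.encode]; omega
  | neg f ih => simp only [maxv, ModalFormula.encode]; omega
  | and f g ihf ihg =>
    have h1 := Nat.left_le_pair (ModalFormula.encode f) (ModalFormula.encode g)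
    have h2 := Nat.right_le_pair (ModalFormula.encode f) (ModalFormula.encode g)
    simp only [maxv, ModalFormula.encode, max_le_iff]; omega
  | or f g ihf ihg =>
    have h1 := Nat.left_le_pair (ModalFormula.encode f) (ModalFormula.encode g)
    have h2 := Nat.right_le_pair (ModalFormula.encode f) (ModalFormula.encode g)
    simp only [maxv, ModalFormula.encode, max_le_iff]; omega
  | dia f ih => simp only [maxv, ModalFormula.encode]; omega
  | box f ih => simp only [maxv, ModalFormula.encode]; omega

theorem sat_congr_pi {W : Type*} {R : W → W → Prop} {π₁ π₂ : W → ℕ → Prop} :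
    ∀ (f : ModalFormula), (∀ w i, i ≤ maxv f → (π₁ w i ↔ π₂ w i)) →
      ∀ w, Sat R π₁ w f ↔ Sat R π₂ w f := by
  intro f
  induction f with
  | var n => intro h w; exact h w n le_rfl
  | neg f ih =>
    intro h w
    simp only [Sat]
    rw [ih (fun w i hi => h w i hi) w]
  | and f g ihf ihg =>
    intro h w
    simp only [Sat]
    rw [ihf (fun w i hi => h w i (le_trans hi (le_max_left _ _))) w,
      ihg (fun w i hi => h w i (le_trans hi (le_max_right _ _))) w]
  | or f g ihf ihg =>
    intro h w
    simp only [Sat]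
    rw [ihf (fun w i hi => h w i (le_trans hi (le_max_left _ _))) w,
      ihg (fun w i hi => h w i (le_trans hi (le_max_right _ _))) w]
  | dia f ih =>
    intro h w
    simp only [Sat]
    constructor <;> rintro ⟨u, hu, hs⟩
    · exact ⟨u, hu, (ih (fun w i hi => h w i hi) u).mp hs⟩
    · exact ⟨u, hu, (ih (fun w i hi => h w i hi) u).mpr hs⟩
  | box f ih =>
    intro h w
    simp only [Sat]
    constructor <;> intro hh u hu
    · exact (ih (fun w i hi => h w i hi) u).mp (hh u hu)
    · exact (ih (fun w i hi => h w i hi) u).mpr (hh u hu)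

theorem sat_iso {A B : Type*} (g : A ≃ B) {R : A → A → Prop} {π : A → ℕ → Prop}
    {R₂ : B → B → Prop} {π₂ : B → ℕ → Prop}
    (hR : ∀ a b, R₂ (g a) (g b) ↔ R a b) (hπ : ∀ a i, π₂ (g a) i ↔ π a i) :
    ∀ (f : ModalFormula) (a : A), Sat R₂ π₂ (g a) f ↔ Sat R π a f := by
  intro f
  induction f with
  | var n => intro a; exact hπ a n
  | neg f ih => intro a; simp only [Sat]; rw [ih a]
  | and f g' ihf ihg => intro a; simp only [Sat]; rw [ihf a, ihg a]
  | or f g' ihf ihg => intro a; simp only [Sat]; rw [ihf a, ihg a]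
  | dia f ih =>
    intro a
    simp only [Sat]
    constructor
    · rintro ⟨u, hu, hs⟩
      refine ⟨g.symm u, ?_, ?_⟩
      · rw [← hR]; simpa using hu
      · rw [← ih (g.symm u)]; simpa using hs
    · rintro ⟨u, hu, hs⟩
      exact ⟨g u, (hR a u).mpr hu, (ih u).mpr hs⟩
  | box f ih =>
    intro a
    simp only [Sat]
    constructor
    · intro hh u hu
      have := hh (g u) ((hR a u).mpr hu)
      exact (ih u).mp this
    · intro hh u hu
      have h1 : R a (g.symm u) := by rw [← hR]; simpa using hu
      have h2 := (ih (g.symm u)).mpr (hh (g.symm u) h1)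
      rw [Equiv.apply_symm_apply] at h2
      exact h2

theorem degGe_iso {A B : Type*} (g : A ≃ B) {R : A → A → Prop} {R₂ : B → B → Prop}
    (hR : ∀ a b, R₂ (g a) (g b) ↔ R a b) (m : ℕ) (a : A) :
    DegGe R₂ m (g a) ↔ DegGe R m a := by
  constructor
  · rintro ⟨f, finj, hf⟩
    refine ⟨fun i => g.symm (f i), fun i j hij => finj (by simpa using congrArg g hij), ?_⟩
    intro i
    rw [← hR]
    simpa using hf i
  · rintro ⟨f, finj, hf⟩
    exact ⟨fun i => g (f i), fun i j hij => finj (by simpa using hij),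
      fun i => (hR a (f i)).mpr (hf i)⟩

/-! ### Generated submodels -/

theorem sat_gen {Wt : Type*} (R : Wt → Wt → Prop) (π : Wt → ℕ → Prop) (U : Set Wt)
    (hcl : ∀ x ∈ U, ∀ y, R x y → y ∈ U) :
    ∀ (f : ModalFormula) (a : U),
      Sat (fun a b : U => R a.1 b.1) (fun (a : U) i => π a.1 i) a f ↔ Sat R π a.1 f := by
  intro f
  induction f with
  | var n => intro a; exact Iff.rfl
  | neg f ih => intro a; simp only [Sat]; rw [ih a]
  | and f g ihf ihg => intro a; simp only [Sat]; rw [ihf a, ihg a]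
  | or f g ihf ihg => intro a; simp only [Sat]; rw [ihf a, ihg a]
  | dia f ih =>
    intro a
    simp only [Sat]
    constructor
    · rintro ⟨u, hu, hs⟩
      exact ⟨u.1, hu, (ih u).mp hs⟩
    · rintro ⟨y, hy, hs⟩
      have hyU : y ∈ U := hcl a.1 a.2 y hy
      exact ⟨⟨y, hyU⟩, hy, (ih ⟨y, hyU⟩).mpr hs⟩
  | box f ih =>
    intro a
    simp only [Sat]
    constructor
    · intro hh y hy
      have hyU : y ∈ U := hcl a.1 a.2 y hy
      exact (ih ⟨y, hyU⟩).mp (hh ⟨y, hyU⟩ hy)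
    · intro hh u hu
      exact (ih u).mpr (hh u.1 hu)

theorem degGe_gen {Wt : Type*} (R : Wt → Wt → Prop) (U : Set Wt) (m : ℕ) (a : U)
    (h : DegGe (fun a b : U => R a.1 b.1) m a) : DegGe R m a.1 := by
  obtain ⟨f, finj, hf⟩ := h
  exact ⟨fun i => (f i).1, fun i j hij => finj (Subtype.ext hij), hf⟩

theorem gamma1_gen {Wt : Type*} (R : Wt → Wt → Prop) (U : Set Wt)
    (hG : FrameGamma1 R) : FrameGamma1 (fun a b : U => R a.1 b.1) := by
  intro htrig
  obtain ⟨x, y, hx, hy, hxy⟩ := htrig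
  have htr : ∃ v₁ v₂, Ramified R v₁ ∧ Ramified R v₂ ∧ v₁ ≠ v₂ := by
    refine ⟨x.1, y.1, degGe_gen R U 7 x hx, degGe_gen R U 7 y hy, fun h => hxy (Subtype.ext h)⟩
  obtain ⟨hirr, hb, hcnd⟩ := hG htr
  refine ⟨fun a => hirr a.1, ?_, ?_⟩
  · intro a b c hram hab hbc
    exact hb a.1 b.1 c.1 (degGe_gen R U 7 a hram) hab hbc
  · intro a b c d hab hac hcd d1 d2 d3
    exact hcnd a.1 b.1 c.1 d.1 hab hac hcd (degGe_gen R U 2 a d1) (degGe_gen R U 4 c d2)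
      (degGe_gen R U 2 d d3)

theorem ramtrans {Wt : Type*} {R : Wt → Wt → Prop}
    (hb : ∀ x y z, Ramified R x → R x y → R y z → R x z) {x : Wt} (hx : Ramified R x)
    {z : Wt} (ht : Relation.TransGen R x z) : R x z := by
  induction ht with
  | single h => exact h
  | tail _ hbc ih => exact hb x _ _ hx ih hbc

theorem no_two_ram {Wt : Type*} [Fintype Wt] [Nonempty Wt] (R : Wt → Wt → Prop)
    (π : Wt → ℕ → Prop) (φ : ModalFormula) (hG : FrameGamma1 R) (hS : GlobalSat R π φ) :
    ∃ (U : Set Wt), U.Nonempty ∧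
      GlobalSat (fun a b : U => R a.1 b.1) (fun (a : U) i => π a.1 i) φ ∧
      ¬ (∃ x y : U, Ramified (fun a b : U => R a.1 b.1) x ∧
          Ramified (fun a b : U => R a.1 b.1) y ∧ x ≠ y) := by
  classical
  set gen : Wt → Set Wt := fun x => {y | Relation.ReflTransGen R x y} with hgen
  obtain ⟨x₀, -, hmin⟩ := Finset.exists_min_image Finset.univ (fun x => (gen x).ncard)
    Finset.univ_nonempty
  set U := gen x₀ with hU
  have hcl : ∀ x ∈ U, ∀ y, R x y → y ∈ U := by
    intro x hx y hxy
    exact Relation.ReflTransGen.tail hx hxy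
  have hgeneq : ∀ a : U, gen a.1 = U := by
    intro a
    have hsub : gen a.1 ⊆ U := by
      intro z hz
      exact Relation.ReflTransGen.trans a.2 hz
    have hle : U.ncard ≤ (gen a.1).ncard := hmin a.1 (Finset.mem_univ _)
    exact Set.eq_of_subset_of_ncard_le hsub hle (Set.toFinite U)
  have hlift : ∀ (p : U) (q : Wt), Relation.ReflTransGen R p.1 q →
      ∃ (hq : q ∈ U), Relation.ReflTransGen (fun a b : U => R a.1 b.1) p ⟨q, hq⟩ := by
    intro p q h
    induction h with
    | refl => exact ⟨p.2, Relation.ReflTransGen.refl⟩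
    | tail hab hbc ih =>
      obtain ⟨hb, hrtg⟩ := ih
      exact ⟨hcl _ hb _ hbc, Relation.ReflTransGen.tail hrtg hbc⟩
  refine ⟨U, ⟨x₀, Relation.ReflTransGen.refl⟩, ?_, ?_⟩
  · intro a
    exact (sat_gen R π U hcl φ a).mpr (hS a.1)
  · rintro ⟨x, y, hrx, hry, hxy⟩
    obtain ⟨hirr, hb, -⟩ := gamma1_gen R U hG
      ⟨x, y, hrx, hry, hxy⟩
    have hreach : ∀ a b : U, a ≠ b → Relation.TransGen (fun a b : U => R a.1 b.1) a b := by
      intro a b hab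
      have hbU : b.1 ∈ gen a.1 := by rw [hgeneq a]; exact b.2
      obtain ⟨hq, hrtg⟩ := hlift a b.1 hbU
      have : (⟨b.1, hq⟩ : U) = b := Subtype.ext rfl
      rw [this] at hrtg
      rcases Relation.reflTransGen_iff_eq_or_transGen.mp hrtg with h | h
      · exact absurd h.symm hab
      · exact h
    have hxy' : R x.1 y.1 := ramtrans hb hrx (hreach x y hxy)
    have hyx' : R y.1 x.1 := ramtrans hb hry (hreach y x (Ne.symm hxy))
    exact hirr x (hb x y x hrx hxy' hyx')

/-! ### Subformulas -/

def sublist : ModalFormula → List ModalFormula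
  | .var n => [.var n]
  | .neg f => .neg f :: sublist f
  | .and f g => .and f g :: (sublist f ++ sublist g)
  | .or f g => .or f g :: (sublist f ++ sublist g)
  | .dia f => .dia f :: sublist f
  | .box f => .box f :: sublist f

theorem self_mem_sublist (f : ModalFormula) : f ∈ sublist f := by
  cases f <;> simp [sublist]

theorem sublist_trans {φ ψ : ModalFormula} (h : ψ ∈ sublist φ) : sublist ψ ⊆ sublist φ := by
  induction φ with
  | var n =>
    simp only [sublist, List.mem_singleton] at h
    subst h; exact fun a ha => ha
  | neg f ih =>
    rcases List.mem_cons.mp h with h' | h'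
    · subst h'; exact fun a ha => ha
    · exact fun a ha => List.mem_cons_of_mem _ (ih h' ha)
  | and f g ihf ihg =>
    rcases List.mem_cons.mp h with h' | h'
    · subst h'; exact fun a ha => ha
    · rcases List.mem_append.mp h' with h'' | h''
      · exact fun a ha => List.mem_cons_of_mem _ (List.mem_append_left _ (ihf h'' ha))
      · exact fun a ha => List.mem_cons_of_mem _ (List.mem_append_right _ (ihg h'' ha))
  | or f g ihf ihg =>
    rcases List.mem_cons.mp h with h' | h'
    · subst h'; exact fun a ha => ha
    · rcases List.mem_append.mp h' with h'' | h''
      · exact fun a ha => List.mem_cons_of_mem _ (List.mem_append_left _ (ihf h'' ha))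
      · exact fun a ha => List.mem_cons_of_mem _ (List.mem_append_right _ (ihg h'' ha))
  | dia f ih =>
    rcases List.mem_cons.mp h with h' | h'
    · subst h'; exact fun a ha => ha
    · exact fun a ha => List.mem_cons_of_mem _ (ih h' ha)
  | box f ih =>
    rcases List.mem_cons.mp h with h' | h'
    · subst h'; exact fun a ha => ha
    · exact fun a ha => List.mem_cons_of_mem _ (ih h' ha)

theorem neg_mem_sublist {φ f : ModalFormula} (h : ModalFormula.neg f ∈ sublist φ) :
    f ∈ sublist φ :=
  sublist_trans h (by simp [sublist, self_mem_sublist])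

theorem dia_mem_sublist {φ f : ModalFormula} (h : ModalFormula.dia f ∈ sublist φ) :
    f ∈ sublist φ :=
  sublist_trans h (by simp [sublist, self_mem_sublist])

theorem box_mem_sublist {φ f : ModalFormula} (h : ModalFormula.box f ∈ sublist φ) :
    f ∈ sublist φ :=
  sublist_trans h (by simp [sublist, self_mem_sublist])

theorem and_mem_sublist {φ f g : ModalFormula} (h : ModalFormula.and f g ∈ sublist φ) :
    f ∈ sublist φ ∧ g ∈ sublist φ :=
  ⟨sublist_trans h (by simp [sublist, self_mem_sublist]),
    sublist_trans h (by simp [sublist, self_mem_sublist])⟩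

theorem or_mem_sublist {φ f g : ModalFormula} (h : ModalFormula.or f g ∈ sublist φ) :
    f ∈ sublist φ ∧ g ∈ sublist φ :=
  ⟨sublist_trans h (by simp [sublist, self_mem_sublist]),
    sublist_trans h (by simp [sublist, self_mem_sublist])⟩

theorem length_sublist_le (f : ModalFormula) :
    (sublist f).length ≤ ModalFormula.encode f + 1 := by
  induction f with
  | var n => simp [sublist, ModalFormula.encode]
  | neg f ih => simp only [sublist, List.length_cons, ModalFormula.encode]; omega
  | and f g ihf ihg =>
    have h1 := Nat.left_le_pair (ModalFormula.encode f) (ModalFormula.encode g)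
    have h2 := Nat.right_le_pair (ModalFormula.encode f) (ModalFormula.encode g)
    simp only [sublist, List.length_cons, List.length_append, ModalFormula.encode]; omega
  | or f g ihf ihg =>
    have h1 := Nat.left_le_pair (ModalFormula.encode f) (ModalFormula.encode g)
    have h2 := Nat.right_le_pair (ModalFormula.encode f) (ModalFormula.encode g)
    simp only [sublist, List.length_cons, List.length_append, ModalFormula.encode]; omega
  | dia f ih => simp only [sublist, List.length_cons, ModalFormula.encode]; omega
  | box f ih => simp only [sublist, List.length_cons, ModalFormula.encode]; omega
/-! ### A canonical choice function -/

noncomputable def pick {Wt : Type*} (p : Wt → Prop) (h : ∃ z, p z) : Wt := h.choose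

theorem pick_spec {Wt : Type*} (p : Wt → Prop) (h : ∃ z, p z) : p (pick p h) := h.choose_spec

theorem pick_congr {Wt : Type*} {p q : Wt → Prop} (h : p = q) (hp : ∃ z, p z)
    (hq : ∃ z, q z) : pick p hp = pick q hq := by subst h; rfl

/-! ### Type collapse: small model with the same properties -/

theorem collapse {Wt : Type*} [Fintype Wt] [Nonempty Wt] (R : Wt → Wt → Prop)
    (π : Wt → ℕ → Prop) (φ : ModalFormula) (hS : GlobalSat R π φ)
    (hno : ¬ ∃ x y, Ramified R x ∧ Ramified R y ∧ x ≠ y) :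
    ∃ (n : ℕ) (R' : Fin n → Fin n → Prop) (π' : Fin n → ℕ → Prop),
      0 < n ∧ n ≤ 2 ^ (sublist φ).length ∧ GlobalSat R' π' φ ∧
      ¬ ∃ x y, Ramified R' x ∧ Ramified R' y ∧ x ≠ y := by
  classical
  set tyEq : Wt → Wt → Prop := fun y z => ∀ ψ ∈ sublist φ, (Sat R π y ψ ↔ Sat R π z ψ)
    with htyEq
  have tyRefl : ∀ y, tyEq y y := fun y ψ _ => Iff.rfl
  have tySymm : ∀ {y z}, tyEq y z → tyEq z y := fun h ψ hψ => (h ψ hψ).symm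
  have tyTrans : ∀ {x y z}, tyEq x y → tyEq y z → tyEq x z :=
    fun h1 h2 ψ hψ => (h1 ψ hψ).trans (h2 ψ hψ)
  set rep : Wt → Wt := fun y => pick (tyEq y) ⟨y, tyRefl y⟩ with hrep
  have hrepty : ∀ y, tyEq y (rep y) := fun y => pick_spec (tyEq y) ⟨y, tyRefl y⟩
  have hrepeq : ∀ {y z}, tyEq y z → rep y = rep z := by
    intro y z h
    have hfe : tyEq y = tyEq z := by
      funext w
      exact propext ⟨fun h1 => tyTrans (tySymm h) h1, fun h1 => tyTrans h h1⟩
    simp only [hrep]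
    exact pick_congr hfe _ _
  have hrepidem : ∀ y, rep (rep y) = rep y := fun y => (hrepeq (hrepty y)).symm
  -- the collapsed carrier
  let Ct := {y : Wt // rep y = y}
  have hCtne : Nonempty Ct := ⟨⟨rep (Classical.arbitrary Wt), hrepidem _⟩⟩
  set R'' : Ct → Ct → Prop := fun a b => ∃ y, R a.1 y ∧ tyEq y b.1 with hR''
  set π'' : Ct → ℕ → Prop := fun a i => π a.1 i with hπ''
  -- truth lemma
  have tl : ∀ ψ, ψ ∈ sublist φ → ∀ a : Ct, (Sat R'' π'' a ψ ↔ Sat R π a.1 ψ) := by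
    intro ψ
    induction ψ with
    | var n => intro _ a; exact Iff.rfl
    | neg f ih =>
      intro hm a
      simp only [Sat]
      rw [ih (neg_mem_sublist hm) a]
    | and f g ihf ihg =>
      intro hm a
      simp only [Sat]
      rw [ihf (and_mem_sublist hm).1 a, ihg (and_mem_sublist hm).2 a]
    | or f g ihf ihg =>
      intro hm a
      simp only [Sat]
      rw [ihf (or_mem_sublist hm).1 a, ihg (or_mem_sublist hm).2 a]
    | dia f ih =>
      intro hm a
      have hfm : f ∈ sublist φ := dia_mem_sublist hm
      simp only [Sat]
      constructor
      · rintro ⟨b, ⟨y, hy, hty⟩, hs⟩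
        refine ⟨y, hy, ?_⟩
        rw [hty f hfm]
        exact (ih hfm b).mp hs
      · rintro ⟨y, hy, hs⟩
        refine ⟨⟨rep y, hrepidem y⟩, ⟨y, hy, hrepty y⟩, ?_⟩
        rw [ih hfm _]
        exact ((hrepty y) f hfm).mp hs
    | box f ih =>
      intro hm a
      have hfm : f ∈ sublist φ := box_mem_sublist hm
      simp only [Sat]
      constructor
      · intro hh y hy
        have := hh ⟨rep y, hrepidem y⟩ ⟨y, hy, hrepty y⟩
        rw [ih hfm _] at this
        exact ((hrepty y) f hfm).mpr this
      · rintro hh b ⟨y, hy, hty⟩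
        rw [ih hfm b, ← hty f hfm]
        exact hh y hy
  have hglob : GlobalSat R'' π'' φ := fun a => (tl φ (self_mem_sublist φ) a).mpr (hS a.1)
  -- ramified pullback
  have hram : ∀ a : Ct, Ramified R'' a → Ramified R a.1 := by
    rintro a ⟨f, finj, hf⟩
    have hspec : ∀ i, R a.1 (Classical.choose (hf i)) ∧
        tyEq (Classical.choose (hf i)) (f i).1 := fun i => Classical.choose_spec (hf i)
    refine ⟨fun i => Classical.choose (hf i), ?_, fun i => (hspec i).1⟩
    intro i j hij
    have hij' : Classical.choose (hf i) = Classical.choose (hf j) := hij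
    have h0 : tyEq (Classical.choose (hf i)) (f j).1 := by
      rw [hij']; exact (hspec j).2
    have h1 : tyEq (f i).1 (f j).1 := tyTrans (tySymm ((hspec i).2)) h0
    have h2 : (f i).1 = (f j).1 := by
      have := hrepeq h1
      rw [(f i).2, (f j).2] at this
      exact this
    exact finj (Subtype.ext h2)
  have hno'' : ¬ ∃ x y, Ramified R'' x ∧ Ramified R'' y ∧ x ≠ y := by
    rintro ⟨x, y, hx, hy, hxy⟩
    exact hno ⟨x.1, y.1, hram x hx, hram y hy, fun h => hxy (Subtype.ext h)⟩
  -- cardinality bound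
  have hcard : Fintype.card Ct ≤ 2 ^ (sublist φ).length := by
    have hinj : Function.Injective
        (fun (a : Ct) (i : Fin (sublist φ).length) =>
          decide (Sat R π a.1 ((sublist φ).get i))) := by
      intro a b hab
      have hty : tyEq a.1 b.1 := by
        intro ψ hψ
        obtain ⟨i, hi, hget⟩ := List.mem_iff_getElem.mp hψ
        have := congrFun hab ⟨i, hi⟩
        simp only [decide_eq_decide] at this
        simpa only [List.get_eq_getElem, hget] using this
      have := hrepeq hty
      rw [a.2, b.2] at this
      exact Subtype.ext this
    calc Fintype.card Ct ≤ Fintype.card (Fin (sublist φ).length → Bool) :=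
          Fintype.card_le_of_injective _ hinj
    _ = 2 ^ (sublist φ).length := by simp [Fintype.card_fun]
  set n := Fintype.card Ct with hn
  have hnpos : 0 < n := Fintype.card_pos
  set E2 : Ct ≃ Fin n := Fintype.equivFin Ct with hE2
  refine ⟨n, fun a b => R'' (E2.symm a) (E2.symm b), fun a i => π'' (E2.symm a) i,
    hnpos, hcard, ?_, ?_⟩
  · intro b
    have := sat_iso E2 (R := R'') (π := π'')
      (R₂ := fun a b => R'' (E2.symm a) (E2.symm b)) (π₂ := fun a i => π'' (E2.symm a) i)
      (by intro a b; simp) (by intro a i; simp) φ (E2.symm b)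
    rw [Equiv.apply_symm_apply] at this
    exact this.mpr (hglob (E2.symm b))
  · rintro ⟨x, y, hx, hy, hxy⟩
    have hdx := (degGe_iso E2 (R := R'') (R₂ := fun a b => R'' (E2.symm a) (E2.symm b))
      (by intro a b; simp) 7 (E2.symm x))
    rw [Equiv.apply_symm_apply] at hdx
    have hdy := (degGe_iso E2 (R := R'') (R₂ := fun a b => R'' (E2.symm a) (E2.symm b))
      (by intro a b; simp) 7 (E2.symm y))
    rw [Equiv.apply_symm_apply] at hdy
    exact hno'' ⟨E2.symm x, E2.symm y, hdx.mp hx, hdy.mp hy,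
      fun h => hxy (by simpa using congrArg E2 h)⟩
/-! ### The decision function -/

def NB (e : ℕ) : ℕ := 2 ^ (e + 1)

def PB (e : ℕ) : ℕ := 2 ^ (NB e * NB e)

def QB (e : ℕ) : ℕ := 2 ^ (NB e * (e + 1))

def HB (e : ℕ) : ℕ := NB e * (PB e * QB e)

def checkModel (e k : ℕ) : Bool :=
  allb (fun w => bitv w (TC (k % NB e + 1) (k / NB e % PB e) (k / NB e / PB e) (e + 1) e))
      (k % NB e + 1)
    && checkG1 (k % NB e + 1) (k / NB e % PB e)

def decider (e : ℕ) : Bool := anyb (fun k => checkModel e k) (HB e)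

def finWsetEquiv (n : ℕ) : Fin n ≃ ↥(Wset n) :=
  ⟨fun a => ⟨a.1, a.2⟩, fun b => ⟨b.1, b.2⟩, fun _ => rfl, fun _ => rfl⟩

theorem main_iff (φ : ModalFormula) :
    FinGSatGamma1 φ ↔ decider (ModalFormula.encode φ) = true := by
  classical
  set e := ModalFormula.encode φ with he
  constructor
  · -- hard direction: compress a model and encode it as a number
    rintro ⟨W, R, π, hne, hfin, hG1, hglob⟩
    haveI := hfin.fintype
    haveI : Nonempty ↥W := hne.to_subtype
    obtain ⟨U, hUne, hUglob, hUno⟩ := no_two_ram R π φ hG1 hglob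
    haveI := (Set.toFinite U).fintype
    haveI : Nonempty ↥U := hUne.to_subtype
    obtain ⟨n, R', π', hnpos, hnle, hglob', hno'⟩ := collapse
      (fun a b : U => R a.1 b.1) (fun (a : U) i => π a.1 i) φ hUglob hUno
    have hnN : n ≤ NB e := by
      refine le_trans hnle ?_
      rw [NB]
      exact Nat.pow_le_pow_right (by norm_num) (length_sublist_le φ)
    set rr := ofBits (fun j =>
      decide (∃ (h1 : j / n < n) (h2 : j % n < n), R' ⟨j / n, h1⟩ ⟨j % n, h2⟩)) (n * n)
      with hrr
    set vv := ofBits (fun j =>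
      decide (∃ (h1 : j / (e + 1) < n), π' ⟨j / (e + 1), h1⟩ (j % (e + 1)))) (n * (e + 1))
      with hvv
    have hrrlt : rr < PB e := by
      refine lt_of_lt_of_le (ofBits_lt _ _) ?_
      rw [PB]
      exact Nat.pow_le_pow_right (by norm_num) (Nat.mul_le_mul hnN hnN)
    have hvvlt : vv < QB e := by
      refine lt_of_lt_of_le (ofBits_lt _ _) ?_
      rw [QB]
      exact Nat.pow_le_pow_right (by norm_num) (Nat.mul_le_mul_right _ hnN)
    set t := rr + PB e * vv with ht
    set k := (n - 1) + NB e * t with hk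
    have hNpos : 0 < NB e := Nat.pow_pos (by norm_num)
    have hPpos : 0 < PB e := Nat.pow_pos (by norm_num)
    have htlt : t + 1 ≤ PB e * QB e := by
      have h1 : t < PB e + PB e * vv := by omega
      have h2 : PB e + PB e * vv = PB e * (vv + 1) := by ring
      have h3 : PB e * (vv + 1) ≤ PB e * QB e := Nat.mul_le_mul_left _ (by omega)
      omega
    have hkH : k < HB e := by
      have h1 : k < NB e + NB e * t := by omega
      have h2 : NB e + NB e * t = NB e * (t + 1) := by ring
      have h3 : NB e * (t + 1) ≤ NB e * (PB e * QB e) := Nat.mul_le_mul_left _ htlt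
      rw [HB]; omega
    have hk1 : k % NB e = n - 1 := by
      rw [hk, Nat.add_mul_mod_self_left, Nat.mod_eq_of_lt (by omega)]
    have hk1' : k % NB e + 1 = n := by omega
    have hk2 : k / NB e = t := by
      rw [hk, Nat.add_mul_div_left _ _ hNpos, Nat.div_eq_of_lt (by omega)]
      omega
    have hk3 : k / NB e % PB e = rr := by
      rw [hk2, ht, Nat.add_mul_mod_self_left, Nat.mod_eq_of_lt hrrlt]
    have hk4 : k / NB e / PB e = vv := by
      rw [hk2, ht, Nat.add_mul_div_left _ _ hPpos, Nat.div_eq_of_lt hrrlt]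
      omega
    -- bridges between the Fin n model and the bit model
    set F := finWsetEquiv n with hF
    have hRbits : ∀ a b : Fin n, Rk n rr (F a) (F b) ↔ R' a b := by
      intro a b
      have hj : a.1 * n + b.1 < n * n := by
        have h1 : a.1 * n + b.1 < a.1 * n + n := by omega
        have h2 : a.1 * n + n = (a.1 + 1) * n := by ring
        have h3 : (a.1 + 1) * n ≤ n * n := Nat.mul_le_mul_right _ (by omega)
        omega
      have : Rk n rr (F a) (F b) ↔ bitv (a.1 * n + b.1) rr = true := Iff.rfl
      rw [this, hrr, bitv_ofBits hj, decide_eq_true_iff]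
      have hdiv : (a.1 * n + b.1) / n = a.1 := by
        rw [show a.1 * n + b.1 = b.1 + a.1 * n by ring,
          Nat.add_mul_div_right _ _ (by omega : 0 < n), Nat.div_eq_of_lt b.2]
        omega
      have hmod : (a.1 * n + b.1) % n = b.1 := by
        rw [show a.1 * n + b.1 = b.1 + a.1 * n by ring,
          Nat.add_mul_mod_self_right, Nat.mod_eq_of_lt b.2]
      constructor
      · rintro ⟨h1, h2, hr⟩
        have ha : (⟨(a.1 * n + b.1) / n, h1⟩ : Fin n) = a := Fin.ext hdiv
        have hb : (⟨(a.1 * n + b.1) % n, h2⟩ : Fin n) = b := Fin.ext hmod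
        rwa [ha, hb] at hr
      · intro hr
        refine ⟨by omega, by omega, ?_⟩
        have ha : (⟨(a.1 * n + b.1) / n, by omega⟩ : Fin n) = a := Fin.ext hdiv
        have hb : (⟨(a.1 * n + b.1) % n, by omega⟩ : Fin n) = b := Fin.ext hmod
        rwa [ha, hb]
    have hPbits : ∀ (a : Fin n) (i : ℕ), i ≤ e → (Pk n vv (e + 1) (F a) i ↔ π' a i) := by
      intro a i hi
      have hj : a.1 * (e + 1) + i < n * (e + 1) := by
        have h1 : a.1 * (e + 1) + i < a.1 * (e + 1) + (e + 1) := by omega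
        have h2 : a.1 * (e + 1) + (e + 1) = (a.1 + 1) * (e + 1) := by ring
        have h3 : (a.1 + 1) * (e + 1) ≤ n * (e + 1) := Nat.mul_le_mul_right _ (by omega)
        omega
      have : Pk n vv (e + 1) (F a) i ↔ bitv (a.1 * (e + 1) + i) vv = true := Iff.rfl
      rw [this, hvv, bitv_ofBits hj, decide_eq_true_iff]
      have hdiv : (a.1 * (e + 1) + i) / (e + 1) = a.1 := by
        rw [show a.1 * (e + 1) + i = i + a.1 * (e + 1) by ring,
          Nat.add_mul_div_right _ _ (by omega : 0 < e + 1), Nat.div_eq_of_lt (by omega)]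
        omega
      have hmod : (a.1 * (e + 1) + i) % (e + 1) = i := by
        rw [show a.1 * (e + 1) + i = i + a.1 * (e + 1) by ring,
          Nat.add_mul_mod_self_right, Nat.mod_eq_of_lt (by omega)]
      constructor
      · rintro ⟨h1, hp⟩
        have ha : (⟨(a.1 * (e + 1) + i) / (e + 1), h1⟩ : Fin n) = a := Fin.ext hdiv
        rw [ha, hmod] at hp
        exact hp
      · intro hp
        refine ⟨by omega, ?_⟩
        have ha : (⟨(a.1 * (e + 1) + i) / (e + 1), by omega⟩ : Fin n) = a := Fin.ext hdiv
        rw [ha, hmod]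
        exact hp
    -- global satisfaction in the bit model
    have hglobbits : GlobalSat (Rk n rr) (Pk n vv (e + 1)) φ := by
      have hiso := sat_iso F (R := R') (π := fun a i => π' a i) (R₂ := Rk n rr)
        (π₂ := fun b i => π' (F.symm b) i) hRbits
        (by intro a i; simp) φ
      intro w
      have h1 : Sat (Rk n rr) (fun b i => π' (F.symm b) i) w φ := by
        have := hiso (F.symm w)
        rw [Equiv.apply_symm_apply] at this
        exact this.mpr (hglob' (F.symm w))
      refine (sat_congr_pi φ ?_ w).mpr h1
      intro b i hi
      have hie : i ≤ e := le_trans hi (maxv_le_encode φ)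
      have := hPbits (F.symm b) i hie
      rw [Equiv.apply_symm_apply] at this
      rw [this]
    -- Γ₁ in the bit model
    have hnobits : ¬ ∃ x y : ↥(Wset n), Ramified (Rk n rr) x ∧ Ramified (Rk n rr) y ∧ x ≠ y := by
      rintro ⟨x, y, hx, hy, hxy⟩
      have hdx := degGe_iso F (R := R') (R₂ := Rk n rr) hRbits 7 (F.symm x)
      rw [Equiv.apply_symm_apply] at hdx
      have hdy := degGe_iso F (R := R') (R₂ := Rk n rr) hRbits 7 (F.symm y)
      rw [Equiv.apply_symm_apply] at hdy
      exact hno' ⟨F.symm x, F.symm y, hdx.mp hx, hdy.mp hy,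
        fun h => hxy (by simpa using congrArg F h)⟩
    have hG1bits : FrameGamma1 (Rk n rr) := fun htrig => (hnobits htrig).elim
    -- assemble
    rw [decider, anyb_iff]
    refine ⟨k, hkH, ?_⟩
    rw [checkModel, hk1', hk3, hk4, Bool.and_eq_true]
    constructor
    · rw [allb_iff]
      intro w hw
      exact (TC_correct n rr vv (e + 1) φ w hw).mpr (hglobbits ⟨w, hw⟩)
    · exact (checkG1_iff n rr).mpr hG1bits
  · -- easy direction: decode the witness model
    intro hd
    rw [decider, anyb_iff] at hd
    obtain ⟨k, -, hck⟩ := hd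
    rw [checkModel, Bool.and_eq_true] at hck
    obtain ⟨hsat, hg1⟩ := hck
    set n := k % NB e + 1 with hn
    set rr := k / NB e % PB e with hrr
    set vv := k / NB e / PB e with hvv
    refine ⟨Wset n, Rk n rr, Pk n vv (e + 1), ⟨0, Nat.succ_pos _⟩, Set.finite_Iio n,
      (checkG1_iff n rr).mp hg1, ?_⟩
    intro w
    rw [allb_iff] at hsat
    exact (TC_correct n rr vv (e + 1) φ w.1 w.2).mp (hsat w.1 w.2)
/-! ### Primitive recursiveness of the decision function -/

theorem primrec_pow : Primrec₂ (fun a b : ℕ => a ^ b) := by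
  have h : Primrec fun p : ℕ × ℕ => nfold 1 (fun _ s => p.1 * s) p.2 :=
    primrec_nfold (Primrec.const 1)
      (Primrec.nat_mul.comp (Primrec.fst.comp Primrec.fst)
        (Primrec.snd.comp Primrec.snd)) Primrec.snd
  refine h.of_eq ?_
  rintro ⟨a, b⟩
  induction b with
  | zero => simp [nfold]
  | succ m ih => simp only [nfold, ih, pow_succ]; ring

theorem primrec_bitv : Primrec₂ bitv := by
  have h : Primrec fun p : ℕ × ℕ => decide (p.2 / 2 ^ p.1 % 2 = 1) :=
    PrimrecPred.decide <| Primrec.eq.comp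
      (Primrec.nat_mod.comp
        (Primrec.nat_div.comp Primrec.snd
          (primrec_pow.comp (Primrec.const 2) Primrec.fst))
        (Primrec.const 2))
      (Primrec.const 1)
  exact h

theorem pnot {α : Type*} [Primcodable α] {f : α → Bool} (hf : Primrec f) :
    Primrec fun a => ! f a := by
  have h := Primrec.cond hf (Primrec.const false) (Primrec.const true)
  refine h.of_eq fun a => ?_
  cases hfa : f a <;> simp

theorem pand {α : Type*} [Primcodable α] {f g : α → Bool} (hf : Primrec f) (hg : Primrec g) :
    Primrec fun a => f a && g a := by
  have h := Primrec.cond hf hg (Primrec.const false)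
  refine h.of_eq fun a => ?_
  cases hfa : f a <;> simp

theorem por {α : Type*} [Primcodable α] {f g : α → Bool} (hf : Primrec f) (hg : Primrec g) :
    Primrec fun a => f a || g a := by
  have h := Primrec.cond hf (Primrec.const true) hg
  refine h.of_eq fun a => ?_
  cases hfa : f a <;> simp

theorem primrec_ofBits {α : Type*} [Primcodable α] {f : α → ℕ → Bool} {n : α → ℕ}
    (hf : Primrec₂ f) (hn : Primrec n) : Primrec fun a => ofBits (f a) (n a) := by
  refine primrec_nfold (α := α) (σ := ℕ) (z := fun _ => 0)
    (g := fun a s acc => acc + if f a s then 2 ^ s else 0) (n := n)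
    (Primrec.const 0) ?_ hn
  refine Primrec.nat_add.comp (Primrec.snd.comp Primrec.snd) ?_
  refine Primrec.ite (c := fun p : α × ℕ × ℕ => f p.1 p.2.1 = true) ?_
    (primrec_pow.comp (Primrec.const 2) (Primrec.fst.comp Primrec.snd)) (Primrec.const 0)
  have h : Primrec fun p : α × ℕ × ℕ => f p.1 p.2.1 :=
    hf.comp Primrec.fst (Primrec.fst.comp Primrec.snd)
  refine Primrec.primrecPred (h.of_eq fun p => ?_)
  cases hfa : f p.1 p.2.1 <;> simp [hfa]

theorem primrec_anyb {α : Type*} [Primcodable α] {f : α → ℕ → Bool} {n : α → ℕ}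
    (hf : Primrec₂ f) (hn : Primrec n) : Primrec fun a => anyb (f a) (n a) := by
  refine primrec_nfold (α := α) (σ := Bool) (z := fun _ => false)
    (g := fun a s acc => acc || f a s) (n := n) (Primrec.const false) ?_ hn
  exact por (Primrec.snd.comp Primrec.snd) (hf.comp Primrec.fst (Primrec.fst.comp Primrec.snd))

theorem primrec_allb {α : Type*} [Primcodable α] {f : α → ℕ → Bool} {n : α → ℕ}
    (hf : Primrec₂ f) (hn : Primrec n) : Primrec fun a => allb (f a) (n a) := by
  refine primrec_nfold (α := α) (σ := Bool) (z := fun _ => true)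
    (g := fun a s acc => acc && f a s) (n := n) (Primrec.const true) ?_ hn
  exact pand (Primrec.snd.comp Primrec.snd) (hf.comp Primrec.fst (Primrec.fst.comp Primrec.snd))

theorem primrec_cntb {α : Type*} [Primcodable α] {f : α → ℕ → Bool} {n : α → ℕ}
    (hf : Primrec₂ f) (hn : Primrec n) : Primrec fun a => cntb (f a) (n a) := by
  refine primrec_nfold (α := α) (σ := ℕ) (z := fun _ => 0)
    (g := fun a s acc => acc + if f a s then 1 else 0) (n := n) (Primrec.const 0) ?_ hn
  refine Primrec.nat_add.comp (Primrec.snd.comp Primrec.snd) ?_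
  refine Primrec.ite (c := fun p : α × ℕ × ℕ => f p.1 p.2.1 = true) ?_
    (Primrec.const 1) (Primrec.const 0)
  have h : Primrec fun p : α × ℕ × ℕ => f p.1 p.2.1 :=
    hf.comp Primrec.fst (Primrec.fst.comp Primrec.snd)
  refine Primrec.primrecPred (h.of_eq fun p => ?_)
  cases hfa : f p.1 p.2.1 <;> simp [hfa]

theorem pRb {β : Type*} [Primcodable β] {n r x y : β → ℕ} (hn : Primrec n) (hr : Primrec r)
    (hx : Primrec x) (hy : Primrec y) : Primrec fun b => Rb (n b) (r b) (x b) (y b) :=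
  primrec_bitv.comp (Primrec.nat_add.comp (Primrec.nat_mul.comp hx hn) hy) hr

theorem pPb {β : Type*} [Primcodable β] {v V w i : β → ℕ} (hv : Primrec v) (hV : Primrec V)
    (hw : Primrec w) (hi : Primrec i) : Primrec fun b => Pb (v b) (V b) (w b) (i b) :=
  primrec_bitv.comp (Primrec.nat_add.comp (Primrec.nat_mul.comp hw hV) hi) hv

theorem pdegb {β : Type*} [Primcodable β] {n r x : β → ℕ} (hn : Primrec n) (hr : Primrec r)
    (hx : Primrec x) : Primrec fun b => degb (n b) (r b) (x b) :=
  primrec_cntb (f := fun b y => Rb (n b) (r b) (x b) y)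
    (pRb (hn.comp Primrec.fst) (hr.comp Primrec.fst) (hx.comp Primrec.fst) Primrec.snd) hn

theorem pdecide_le {β : Type*} [Primcodable β] (c : ℕ) {g : β → ℕ} (hg : Primrec g) :
    Primrec fun b => decide (c ≤ g b) :=
  PrimrecPred.decide <| Primrec.nat_le.comp (Primrec.const c) hg

theorem pramb {β : Type*} [Primcodable β] {n r x : β → ℕ} (hn : Primrec n) (hr : Primrec r)
    (hx : Primrec x) : Primrec fun b => ramb (n b) (r b) (x b) :=
  pdecide_le 7 (pdegb hn hr hx)

theorem pcheckIrr {β : Type*} [Primcodable β] {n r : β → ℕ} (hn : Primrec n) (hr : Primrec r) :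
    Primrec fun b => checkIrr (n b) (r b) :=
  primrec_allb (f := fun b x => ! Rb (n b) (r b) x x)
    (pnot (pRb (hn.comp Primrec.fst) (hr.comp Primrec.fst) Primrec.snd Primrec.snd)) hn

theorem pcheckTrig {β : Type*} [Primcodable β] {n r : β → ℕ} (hn : Primrec n)
    (hr : Primrec r) : Primrec fun b => checkTrig (n b) (r b) := by
  refine primrec_anyb
    (f := fun b x => ramb (n b) (r b) x && anyb (fun y => ramb (n b) (r b) y && !(x == y)) (n b))
    ?_ hn
  refine pand (pramb (hn.comp Primrec.fst) (hr.comp Primrec.fst) Primrec.snd) ?_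
  refine primrec_anyb
    (f := fun (p : β × ℕ) y => ramb (n p.1) (r p.1) y && !(p.2 == y)) ?_ (hn.comp Primrec.fst)
  refine pand
    (pramb (hn.comp (Primrec.fst.comp Primrec.fst)) (hr.comp (Primrec.fst.comp Primrec.fst))
      Primrec.snd)
    (pnot (Primrec.beq.comp (Primrec.snd.comp Primrec.fst) Primrec.snd))

theorem pcheckB2 {β : Type*} [Primcodable β] {n r : β → ℕ} (hn : Primrec n)
    (hr : Primrec r) : Primrec fun b => checkB2 (n b) (r b) := by
  refine primrec_allb (f := fun b x => !ramb (n b) (r b) x ||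
    allb (fun y => !Rb (n b) (r b) x y ||
      allb (fun z => !Rb (n b) (r b) y z || Rb (n b) (r b) x z) (n b)) (n b)) ?_ hn
  refine por (pnot (pramb (hn.comp Primrec.fst) (hr.comp Primrec.fst) Primrec.snd)) ?_
  refine primrec_allb (f := fun (p : β × ℕ) y => !Rb (n p.1) (r p.1) p.2 y ||
    allb (fun z => !Rb (n p.1) (r p.1) y z || Rb (n p.1) (r p.1) p.2 z) (n p.1))
    ?_ (hn.comp Primrec.fst)
  have f1 : Primrec fun q : (β × ℕ) × ℕ => n q.1.1 := hn.comp (Primrec.fst.comp Primrec.fst)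
  have r1 : Primrec fun q : (β × ℕ) × ℕ => r q.1.1 := hr.comp (Primrec.fst.comp Primrec.fst)
  refine por (pnot (pRb f1 r1 (Primrec.snd.comp Primrec.fst) Primrec.snd)) ?_
  refine primrec_allb (f := fun (q : (β × ℕ) × ℕ) z =>
    !Rb (n q.1.1) (r q.1.1) q.2 z || Rb (n q.1.1) (r q.1.1) q.1.2 z) ?_ f1
  have f2 : Primrec fun q : ((β × ℕ) × ℕ) × ℕ => n q.1.1.1 :=
    hn.comp (Primrec.fst.comp (Primrec.fst.comp Primrec.fst))
  have r2 : Primrec fun q : ((β × ℕ) × ℕ) × ℕ => r q.1.1.1 :=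
    hr.comp (Primrec.fst.comp (Primrec.fst.comp Primrec.fst))
  exact por (pnot (pRb f2 r2 (Primrec.snd.comp Primrec.fst) Primrec.snd))
    (pRb f2 r2 (Primrec.snd.comp (Primrec.fst.comp Primrec.fst)) Primrec.snd)

theorem pcheckC {β : Type*} [Primcodable β] {n r : β → ℕ} (hn : Primrec n)
    (hr : Primrec r) : Primrec fun b => checkC (n b) (r b) := by
  refine primrec_allb (f := fun b x => allb (fun y => allb (fun u => allb (fun z =>
    !(Rb (n b) (r b) x y && Rb (n b) (r b) x u && Rb (n b) (r b) u z
        && decide (2 ≤ degb (n b) (r b) x) && decide (4 ≤ degb (n b) (r b) u)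
        && decide (2 ≤ degb (n b) (r b) z))
      || (Rb (n b) (r b) y z || Rb (n b) (r b) x z)) (n b)) (n b)) (n b)) ?_ hn
  have f1 : Primrec fun q : β × ℕ => n q.1 := hn.comp Primrec.fst
  refine primrec_allb ?_ f1
  have f2 : Primrec fun q : (β × ℕ) × ℕ => n q.1.1 := hn.comp (Primrec.fst.comp Primrec.fst)
  refine primrec_allb ?_ f2
  have f3 : Primrec fun q : ((β × ℕ) × ℕ) × ℕ => n q.1.1.1 :=
    hn.comp (Primrec.fst.comp (Primrec.fst.comp Primrec.fst))
  refine primrec_allb ?_ f3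
  -- innermost: q : (((β × ℕ) × ℕ) × ℕ) × ℕ with b = q.1.1.1.1, x = q.1.1.1.2, y = q.1.1.2,
  -- u = q.1.2, z = q.2
  have pb : Primrec fun q : (((β × ℕ) × ℕ) × ℕ) × ℕ => q.1.1.1.1 :=
    Primrec.fst.comp (Primrec.fst.comp (Primrec.fst.comp Primrec.fst))
  have hN : Primrec fun q : (((β × ℕ) × ℕ) × ℕ) × ℕ => n q.1.1.1.1 := hn.comp pb
  have hR : Primrec fun q : (((β × ℕ) × ℕ) × ℕ) × ℕ => r q.1.1.1.1 := hr.comp pb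
  have hx : Primrec fun q : (((β × ℕ) × ℕ) × ℕ) × ℕ => q.1.1.1.2 :=
    Primrec.snd.comp (Primrec.fst.comp (Primrec.fst.comp Primrec.fst))
  have hy : Primrec fun q : (((β × ℕ) × ℕ) × ℕ) × ℕ => q.1.1.2 :=
    Primrec.snd.comp (Primrec.fst.comp Primrec.fst)
  have hu : Primrec fun q : (((β × ℕ) × ℕ) × ℕ) × ℕ => q.1.2 :=
    Primrec.snd.comp Primrec.fst
  have hz : Primrec fun q : (((β × ℕ) × ℕ) × ℕ) × ℕ => q.2 := Primrec.snd
  refine por (pnot (pand (pand (pand (pand (pand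
    (pRb hN hR hx hy) (pRb hN hR hx hu)) (pRb hN hR hu hz))
    (pdecide_le 2 (pdegb hN hR hx))) (pdecide_le 4 (pdegb hN hR hu)))
    (pdecide_le 2 (pdegb hN hR hz)))) (por (pRb hN hR hy hz) (pRb hN hR hx hz))

theorem pcheckG1 {β : Type*} [Primcodable β] {n r : β → ℕ} (hn : Primrec n)
    (hr : Primrec r) : Primrec fun b => checkG1 (n b) (r b) :=
  por (pnot (pcheckTrig hn hr))
    (pand (pand (pcheckIrr hn hr) (pcheckB2 hn hr)) (pcheckC hn hr))
/-! ### Primitive recursiveness of `TC` via strong recursion -/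

def TCg (a : ℕ × ℕ × ℕ × ℕ) (l : List ℕ) : Option ℕ :=
  if l.length % 6 = 0 then
    some (ofBits (fun w => Pb a.2.2.1 a.2.2.2 w (l.length / 6)) a.1)
  else if l.length % 6 = 1 then
    (l[l.length / 6]?).map (fun t => ofBits (fun w => ! bitv w t) a.1)
  else if l.length % 6 = 2 then
    (l[l.length / 6]?).map (fun t =>
      ofBits (fun w => anyb (fun y => Rb a.1 a.2.1 w y && bitv y t) a.1) a.1)
  else if l.length % 6 = 3 then
    (l[l.length / 6]?).map (fun t =>
      ofBits (fun w => allb (fun y => !Rb a.1 a.2.1 w y || bitv y t) a.1) a.1)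
  else if l.length % 6 = 4 then
    (l[(l.length / 6).unpair.1]?).bind (fun t1 =>
      (l[(l.length / 6).unpair.2]?).map (fun t2 =>
        ofBits (fun w => bitv w t1 && bitv w t2) a.1))
  else
    (l[(l.length / 6).unpair.1]?).bind (fun t1 =>
      (l[(l.length / 6).unpair.2]?).map (fun t2 =>
        ofBits (fun w => bitv w t1 || bitv w t2) a.1))

theorem TCg_spec (a : ℕ × ℕ × ℕ × ℕ) (m : ℕ) :
    TCg a ((List.range m).map (fun i => TC a.1 a.2.1 a.2.2.1 a.2.2.2 i)) =
      some (TC a.1 a.2.1 a.2.2.1 a.2.2.2 m) := by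
  set ft := fun i => TC a.1 a.2.1 a.2.2.1 a.2.2.2 i with hft
  have hlen : ((List.range m).map ft).length = m := by simp
  have hget : ∀ j, j < m → ((List.range m).map ft)[j]? = some (ft j) := by
    intro j hj
    rw [List.getElem?_map, List.getElem?_range hj, Option.map_some]
  rw [TCg, hlen]
  by_cases h0 : m % 6 = 0
  · rw [if_pos h0, TC, dif_pos h0]
  · have hm : 0 < m := Nat.pos_of_ne_zero (fun h => h0 (by simp [h]))
    have hd : m / 6 < m := Nat.div_lt_self hm (by norm_num)
    have hu1 : (m / 6).unpair.1 < m := lt_of_le_of_lt (Nat.unpair_left_le _) hd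
    have hu2 : (m / 6).unpair.2 < m := lt_of_le_of_lt (Nat.unpair_right_le _) hd
    rw [if_neg h0, TC, dif_neg h0]
    by_cases h1 : m % 6 = 1
    · rw [if_pos h1, if_pos h1, hget _ hd, Option.map_some]
    · rw [if_neg h1, if_neg h1]
      by_cases h2 : m % 6 = 2
      · rw [if_pos h2, if_pos h2, hget _ hd, Option.map_some]
      · rw [if_neg h2, if_neg h2]
        by_cases h3 : m % 6 = 3
        · rw [if_pos h3, if_pos h3, hget _ hd, Option.map_some]
        · rw [if_neg h3, if_neg h3]
          by_cases h4 : m % 6 = 4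
          · rw [if_pos h4, if_pos h4, hget _ hu1, hget _ hu2]
            rfl
          · rw [if_neg h4, if_neg h4, hget _ hu1, hget _ hu2]
            rfl

theorem pTCg : Primrec₂ TCg := by
  have pl : Primrec fun p : (ℕ × ℕ × ℕ × ℕ) × List ℕ => p.2 := Primrec.snd
  have pn : Primrec fun p : (ℕ × ℕ × ℕ × ℕ) × List ℕ => p.1.1 :=
    Primrec.fst.comp Primrec.fst
  have pr : Primrec fun p : (ℕ × ℕ × ℕ × ℕ) × List ℕ => p.1.2.1 :=
    Primrec.fst.comp (Primrec.snd.comp Primrec.fst)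
  have pv : Primrec fun p : (ℕ × ℕ × ℕ × ℕ) × List ℕ => p.1.2.2.1 :=
    Primrec.fst.comp (Primrec.snd.comp (Primrec.snd.comp Primrec.fst))
  have pV : Primrec fun p : (ℕ × ℕ × ℕ × ℕ) × List ℕ => p.1.2.2.2 :=
    Primrec.snd.comp (Primrec.snd.comp (Primrec.snd.comp Primrec.fst))
  have plen : Primrec fun p : (ℕ × ℕ × ℕ × ℕ) × List ℕ => p.2.length :=
    Primrec.list_length.comp Primrec.snd
  have pm6 : Primrec fun p : (ℕ × ℕ × ℕ × ℕ) × List ℕ => p.2.length % 6 :=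
    Primrec.nat_mod.comp plen (Primrec.const 6)
  have pd6 : Primrec fun p : (ℕ × ℕ × ℕ × ℕ) × List ℕ => p.2.length / 6 :=
    Primrec.nat_div.comp plen (Primrec.const 6)
  have pu1 : Primrec fun p : (ℕ × ℕ × ℕ × ℕ) × List ℕ => (p.2.length / 6).unpair.1 :=
    Primrec.fst.comp (Primrec.unpair.comp pd6)
  have pu2 : Primrec fun p : (ℕ × ℕ × ℕ × ℕ) × List ℕ => (p.2.length / 6).unpair.2 :=
    Primrec.snd.comp (Primrec.unpair.comp pd6)
  have pget : Primrec fun p : (ℕ × ℕ × ℕ × ℕ) × List ℕ => p.2[p.2.length / 6]? :=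
    Primrec.list_getElem?.comp pl pd6
  have pget1 : Primrec fun p : (ℕ × ℕ × ℕ × ℕ) × List ℕ =>
      p.2[(p.2.length / 6).unpair.1]? := Primrec.list_getElem?.comp pl pu1
  -- branch 0
  have B0 : Primrec fun p : (ℕ × ℕ × ℕ × ℕ) × List ℕ =>
      some (ofBits (fun w => Pb p.1.2.2.1 p.1.2.2.2 w (p.2.length / 6)) p.1.1) := by
    refine Primrec.option_some.comp ?_
    exact primrec_ofBits
      (pPb (pv.comp Primrec.fst) (pV.comp Primrec.fst) Primrec.snd (pd6.comp Primrec.fst)) pn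
  -- branch 1
  have B1 : Primrec fun p : (ℕ × ℕ × ℕ × ℕ) × List ℕ =>
      (p.2[p.2.length / 6]?).map (fun t => ofBits (fun w => ! bitv w t) p.1.1) := by
    refine Primrec.option_map pget ?_
    exact primrec_ofBits
      (pnot (primrec_bitv.comp Primrec.snd (Primrec.snd.comp Primrec.fst)))
      (pn.comp Primrec.fst)
  -- branch 2
  have B2 : Primrec fun p : (ℕ × ℕ × ℕ × ℕ) × List ℕ =>
      (p.2[p.2.length / 6]?).map (fun t =>
        ofBits (fun w => anyb (fun y => Rb p.1.1 p.1.2.1 w y && bitv y t) p.1.1) p.1.1) := by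
    refine Primrec.option_map pget ?_
    refine primrec_ofBits (f := fun (q : ((ℕ × ℕ × ℕ × ℕ) × List ℕ) × ℕ) w =>
      anyb (fun y => Rb q.1.1.1 q.1.1.2.1 w y && bitv y q.2) q.1.1.1) ?_
      (pn.comp Primrec.fst)
    refine primrec_anyb (f := fun (s : (((ℕ × ℕ × ℕ × ℕ) × List ℕ) × ℕ) × ℕ) y =>
      Rb s.1.1.1.1 s.1.1.1.2.1 s.2 y && bitv y s.1.2) ?_
      (pn.comp (Primrec.fst.comp Primrec.fst))
    exact pand
      (pRb (pn.comp (Primrec.fst.comp (Primrec.fst.comp Primrec.fst)))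
        (pr.comp (Primrec.fst.comp (Primrec.fst.comp Primrec.fst)))
        (Primrec.snd.comp Primrec.fst) Primrec.snd)
      (primrec_bitv.comp Primrec.snd (Primrec.snd.comp (Primrec.fst.comp Primrec.fst)))
  -- branch 3
  have B3 : Primrec fun p : (ℕ × ℕ × ℕ × ℕ) × List ℕ =>
      (p.2[p.2.length / 6]?).map (fun t =>
        ofBits (fun w => allb (fun y => !Rb p.1.1 p.1.2.1 w y || bitv y t) p.1.1) p.1.1) := by
    refine Primrec.option_map pget ?_
    refine primrec_ofBits (f := fun (q : ((ℕ × ℕ × ℕ × ℕ) × List ℕ) × ℕ) w =>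
      allb (fun y => !Rb q.1.1.1 q.1.1.2.1 w y || bitv y q.2) q.1.1.1) ?_
      (pn.comp Primrec.fst)
    refine primrec_allb (f := fun (s : (((ℕ × ℕ × ℕ × ℕ) × List ℕ) × ℕ) × ℕ) y =>
      !Rb s.1.1.1.1 s.1.1.1.2.1 s.2 y || bitv y s.1.2) ?_
      (pn.comp (Primrec.fst.comp Primrec.fst))
    exact por
      (pnot (pRb (pn.comp (Primrec.fst.comp (Primrec.fst.comp Primrec.fst)))
        (pr.comp (Primrec.fst.comp (Primrec.fst.comp Primrec.fst)))
        (Primrec.snd.comp Primrec.fst) Primrec.snd))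
      (primrec_bitv.comp Primrec.snd (Primrec.snd.comp (Primrec.fst.comp Primrec.fst)))
  -- branch 4
  have B4 : Primrec fun p : (ℕ × ℕ × ℕ × ℕ) × List ℕ =>
      (p.2[(p.2.length / 6).unpair.1]?).bind (fun t1 =>
        (p.2[(p.2.length / 6).unpair.2]?).map (fun t2 =>
          ofBits (fun w => bitv w t1 && bitv w t2) p.1.1)) := by
    refine Primrec.option_bind pget1 ?_
    refine Primrec.option_map
      (Primrec.list_getElem?.comp (pl.comp Primrec.fst) (pu2.comp Primrec.fst)) ?_
    refine primrec_ofBits (f := fun (s : (((ℕ × ℕ × ℕ × ℕ) × List ℕ) × ℕ) × ℕ) w =>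
      bitv w s.1.2 && bitv w s.2) ?_ (pn.comp (Primrec.fst.comp Primrec.fst))
    exact pand (primrec_bitv.comp Primrec.snd (Primrec.snd.comp (Primrec.fst.comp Primrec.fst)))
      (primrec_bitv.comp Primrec.snd (Primrec.snd.comp Primrec.fst))
  -- branch 5
  have B5 : Primrec fun p : (ℕ × ℕ × ℕ × ℕ) × List ℕ =>
      (p.2[(p.2.length / 6).unpair.1]?).bind (fun t1 =>
        (p.2[(p.2.length / 6).unpair.2]?).map (fun t2 =>
          ofBits (fun w => bitv w t1 || bitv w t2) p.1.1)) := by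
    refine Primrec.option_bind pget1 ?_
    refine Primrec.option_map
      (Primrec.list_getElem?.comp (pl.comp Primrec.fst) (pu2.comp Primrec.fst)) ?_
    refine primrec_ofBits (f := fun (s : (((ℕ × ℕ × ℕ × ℕ) × List ℕ) × ℕ) × ℕ) w =>
      bitv w s.1.2 || bitv w s.2) ?_ (pn.comp (Primrec.fst.comp Primrec.fst))
    exact por (primrec_bitv.comp Primrec.snd (Primrec.snd.comp (Primrec.fst.comp Primrec.fst)))
      (primrec_bitv.comp Primrec.snd (Primrec.snd.comp Primrec.fst))
  have e0 : PrimrecPred fun p : (ℕ × ℕ × ℕ × ℕ) × List ℕ => p.2.length % 6 = 0 :=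
    Primrec.eq.comp pm6 (Primrec.const 0)
  have e1 : PrimrecPred fun p : (ℕ × ℕ × ℕ × ℕ) × List ℕ => p.2.length % 6 = 1 :=
    Primrec.eq.comp pm6 (Primrec.const 1)
  have e2 : PrimrecPred fun p : (ℕ × ℕ × ℕ × ℕ) × List ℕ => p.2.length % 6 = 2 :=
    Primrec.eq.comp pm6 (Primrec.const 2)
  have e3 : PrimrecPred fun p : (ℕ × ℕ × ℕ × ℕ) × List ℕ => p.2.length % 6 = 3 :=
    Primrec.eq.comp pm6 (Primrec.const 3)
  have e4 : PrimrecPred fun p : (ℕ × ℕ × ℕ × ℕ) × List ℕ => p.2.length % 6 = 4 :=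
    Primrec.eq.comp pm6 (Primrec.const 4)
  exact Primrec.ite e0 B0 (Primrec.ite e1 B1 (Primrec.ite e2 B2
    (Primrec.ite e3 B3 (Primrec.ite e4 B4 B5))))

theorem pTC : Primrec₂ fun (a : ℕ × ℕ × ℕ × ℕ) (m : ℕ) =>
    TC a.1 a.2.1 a.2.2.1 a.2.2.2 m :=
  Primrec.nat_strong_rec _ pTCg TCg_spec

theorem pcheckModel : Primrec₂ checkModel := by
  have pe : Primrec fun p : ℕ × ℕ => p.1 := Primrec.fst
  have pk : Primrec fun p : ℕ × ℕ => p.2 := Primrec.snd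
  have pNB : Primrec fun p : ℕ × ℕ => NB p.1 :=
    primrec_pow.comp (Primrec.const 2) (Primrec.succ.comp pe)
  have pPBe : Primrec fun p : ℕ × ℕ => PB p.1 :=
    primrec_pow.comp (Primrec.const 2) (Primrec.nat_mul.comp pNB pNB)
  have pn : Primrec fun p : ℕ × ℕ => p.2 % NB p.1 + 1 :=
    Primrec.succ.comp (Primrec.nat_mod.comp pk pNB)
  have pt : Primrec fun p : ℕ × ℕ => p.2 / NB p.1 := Primrec.nat_div.comp pk pNB
  have prr : Primrec fun p : ℕ × ℕ => p.2 / NB p.1 % PB p.1 := Primrec.nat_mod.comp pt pPBe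
  have pvv : Primrec fun p : ℕ × ℕ => p.2 / NB p.1 / PB p.1 := Primrec.nat_div.comp pt pPBe
  have pT0 : Primrec fun p : ℕ × ℕ =>
      TC (p.2 % NB p.1 + 1) (p.2 / NB p.1 % PB p.1) (p.2 / NB p.1 / PB p.1) (p.1 + 1) p.1 :=
    pTC.comp (pn.pair (prr.pair (pvv.pair (Primrec.succ.comp pe)))) pe
  have pallb : Primrec fun p : ℕ × ℕ =>
      allb (fun w => bitv w (TC (p.2 % NB p.1 + 1) (p.2 / NB p.1 % PB p.1)
        (p.2 / NB p.1 / PB p.1) (p.1 + 1) p.1)) (p.2 % NB p.1 + 1) :=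
    primrec_allb (primrec_bitv.comp Primrec.snd (pT0.comp Primrec.fst)) pn
  exact pand pallb (pcheckG1 pn prr)

theorem pdecider : Primrec decider := by
  have pNB1 : Primrec NB := primrec_pow.comp (Primrec.const 2) Primrec.succ
  have pPB1 : Primrec PB :=
    primrec_pow.comp (Primrec.const 2) (Primrec.nat_mul.comp pNB1 pNB1)
  have pQB1 : Primrec QB :=
    primrec_pow.comp (Primrec.const 2) (Primrec.nat_mul.comp pNB1 Primrec.succ)
  have pHB : Primrec HB := Primrec.nat_mul.comp pNB1 (Primrec.nat_mul.comp pPB1 pQB1)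
  exact primrec_anyb pcheckModel pHB

theorem pfinal : Primrec fun φ : ModalFormula => decider (ModalFormula.encode φ) := by
  have h1 : Primrec (ModalFormula.encode) := Primrec.encode (α := ModalFormula)
  exact pdecider.comp h1
end G1Dec

/-- The finite global Γ₁-satisfiability problem for modal logic is decidable. -/
theorem gamma1_fingsat_decidable : ComputablePred FinGSatGamma1 := by
  rw [ComputablePred.computable_iff]
  refine ⟨fun φ => G1Dec.decider (ModalFormula.encode φ), G1Dec.pfinal.to_comp, ?_⟩
  funext φ
  exact propext (G1Dec.main_iff φ)
end

section
/- If a modal formula φ is globally satisfied in some nonempty finite Kripke model whose frame satisfies Γ₁, then φ is globally satisfied in some nonempty finite Kripke model containing at most one ramified world. -/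
section Aux

variable {W : Type} {R : W → W → Prop} {π : W → ℕ → Prop} {S : Set W}

theorem sat_restrict (hS : ∀ ⦃w v⦄, w ∈ S → R w v → v ∈ S) :
    ∀ (f : ModalFormula) (w : S),
      Sat (fun a b : S => R a.1 b.1) (fun a => π a.1) w f ↔ Sat R π w.1 f := by
  intro f
  induction f with
  | var n => intro w; simp [Sat]
  | neg f ih => intro w; simp [Sat, ih]
  | and f g ihf ihg => intro w; simp [Sat, ihf, ihg]
  | or f g ihf ihg => intro w; simp [Sat, ihf, ihg]
  | dia f ih =>
      intro w
      constructor
      · rintro ⟨v, hv, h⟩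
        exact ⟨v.1, hv, (ih v).mp h⟩
      · rintro ⟨v, hv, h⟩
        exact ⟨⟨v, hS w.2 hv⟩, hv, (ih _).mpr h⟩
  | box f ih =>
      intro w
      constructor
      · rintro h v hv
        exact (ih ⟨v, hS w.2 hv⟩).mp (h _ hv)
      · rintro h v hv
        exact (ih v).mpr (h v.1 hv)

theorem degGe_restrict (hS : ∀ ⦃w v⦄, w ∈ S → R w v → v ∈ S) (m : ℕ) (w : S) :
    DegGe (fun a b : S => R a.1 b.1) m w ↔ DegGe R m w.1 := by
  constructor
  · rintro ⟨f, inj, hr⟩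
    exact ⟨fun i => (f i).1, Subtype.val_injective.comp inj, hr⟩
  · rintro ⟨f, inj, hr⟩
    refine ⟨fun i => ⟨f i, hS w.2 (hr i)⟩, ?_, fun i => hr i⟩
    intro i j h
    exact inj (congrArg Subtype.val h)

end Aux

/-- If a modal formula `φ` is globally satisfied in some nonempty finite Kripke model whose
frame satisfies Γ₁, then `φ` is globally satisfied in some nonempty finite Kripke model
containing at most one ramified world. -/
theorem finite_gamma1_model_to_at_most_one_ramified (φ : ModalFormula)
    (h : ∃ (W : Type) (R : W → W → Prop) (π : W → ℕ → Prop),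
      Finite W ∧ Nonempty W ∧ FrameGamma1 R ∧ GlobalSat R π φ) :
    ∃ (W : Type) (R : W → W → Prop) (π : W → ℕ → Prop),
      Finite W ∧ Nonempty W ∧
      (∀ v₁ v₂, Ramified R v₁ → Ramified R v₂ → v₁ = v₂) ∧ GlobalSat R π φ := by

  obtain ⟨W, R, π, hFin, hNe, hG1, hGS⟩ := h
  by_cases htwo : ∃ v₁ v₂, Ramified R v₁ ∧ Ramified R v₂ ∧ v₁ ≠ v₂
  · obtain ⟨hirr, htrans, _⟩ := hG1 htwo
    obtain ⟨x₀, x₁, hx₀, _⟩ := htwo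
    -- choose a ramified world with minimal successor set
    have hfin : ({x | Ramified R x} : Set W).Finite := Set.toFinite _
    obtain ⟨x, hx, hmin⟩ := Set.exists_min_image {x | Ramified R x}
      (fun x => ({y | R x y} : Set W).ncard) hfin ⟨x₀, hx₀⟩
    set S : Set W := {y | R x y} with hSdef
    have hS : ∀ ⦃w v⦄, w ∈ S → R w v → v ∈ S := fun w v hw hwv => htrans x w v hx hw hwv
    have hSne : S.Nonempty := by
      obtain ⟨f, _, hf⟩ := hx
      exact ⟨f 0, hf 0⟩
    refine ⟨S, fun a b => R a.1 b.1, fun a => π a.1, Subtype.finite, hSne.to_subtype, ?_, ?_⟩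
    · intro v₁ v₂ h₁ h₂
      exfalso
      have hr1 : Ramified R v₁.1 := (degGe_restrict hS 7 v₁).mp h₁
      have hsub : ({y | R v₁.1 y} : Set W) ⊂ S := by
        constructor
        · intro z hz
          exact htrans x v₁.1 z hx v₁.2 hz
        · intro hcon
          exact hirr v₁.1 (hcon v₁.2)
      have := Set.ncard_lt_ncard hsub (Set.toFinite _)
      have := hmin v₁.1 hr1
      omega
    · intro w
      exact (sat_restrict hS φ w).mpr (hGS w.1)
  · refine ⟨W, R, π, hFin, hNe, ?_, hGS⟩
    intro v₁ v₂ h₁ h₂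
    by_contra hne
    exact htwo ⟨v₁, v₂, h₁, h₂, hne⟩
end

section
/- Let (W,R) be a finite frame such that for all x,y,z with x ramified, R x y and R y z imply R x z. Let S ⊆ W be a nonempty set of worlds such that every w ∈ S is ramified and from every w ∈ S there is an R-path of length at least 1 to some element of S. Then there exists w ∈ S with R w w. -/
/-- In a finite frame in which `R` is transitive from ramified worlds, any nonempty set `S` of
ramified worlds such that from every element of `S` there is an `R`-path of length at least one
to some element of `S` contains a reflexive world. (An `R`-path of length at least one from `w`
to `v` is witnessed by `Relation.TransGen R w v`.) -/
theorem exists_reflexive_in_ramified_cycle_set (W : Type) [Finite W] (R : W → W → Prop)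
    (htrans : ∀ x y z, Ramified R x → R x y → R y z → R x z)
    (S : Set W) (hne : S.Nonempty)
    (hram : ∀ w ∈ S, Ramified R w)
    (hpath : ∀ w ∈ S, ∃ v ∈ S, Relation.TransGen R w v) :
    ∃ w ∈ S, R w w := by
  -- From a ramified world, a TransGen path collapses to a single R-step.
  have collapse : ∀ w v : W, Ramified R w → Relation.TransGen R w v → R w v := by
    intro w v hw h
    induction h with
    | single h => exact h
    | tail _ h ih => exact htrans _ _ _ hw ih h
  -- Choose for each element of S a successor in S.
  have hstep : ∀ w : S, ∃ v : S, R (w : W) (v : W) := by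
    rintro ⟨w, hw⟩
    obtain ⟨v, hv, hp⟩ := hpath w hw
    exact ⟨⟨v, hv⟩, collapse w v (hram w hw) hp⟩
  choose f hf using hstep
  -- Any iterate of f is reached by a TransGen path.
  have hiter : ∀ (k : ℕ) (b : S), Relation.TransGen R (b : W) ((f^[k+1] b : S) : W) := by
    intro k
    induction k with
    | zero => intro b; exact Relation.TransGen.single (hf b)
    | succ n ih =>
        intro b
        have : f^[n+1+1] b = f^[n+1] (f b) := by
          rw [Function.iterate_succ_apply]
        rw [this]
        exact Relation.TransGen.head (hf b) (ih (f b))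
  -- Pigeonhole: f has a periodic point.
  obtain ⟨w0, hw0⟩ := hne
  have : ∃ i j : ℕ, i < j ∧ f^[i] ⟨w0, hw0⟩ = f^[j] ⟨w0, hw0⟩ := by
    haveI : Finite S := Subtype.finite
    have : ¬ Function.Injective (fun n : ℕ => f^[n] ⟨w0, hw0⟩) :=
      not_injective_infinite_finite _
    simp only [Function.Injective, not_forall] at this
    obtain ⟨i, j, hij, hne'⟩ := this
    rcases lt_or_gt_of_ne hne' with h | h
    · exact ⟨i, j, h, hij⟩
    · exact ⟨j, i, h, hij.symm⟩
  obtain ⟨i, j, hij, heq⟩ := this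
  set a : S := f^[i] ⟨w0, hw0⟩ with ha
  have hcyc : f^[j - i] a = a := by
    have : f^[j - i] (f^[i] ⟨w0, hw0⟩) = f^[j] ⟨w0, hw0⟩ := by
      rw [← Function.iterate_add_apply]
      congr 1
      omega
    rw [ha, this, ← heq]
  obtain ⟨k, hk⟩ : ∃ k, j - i = k + 1 := ⟨j - i - 1, by omega⟩
  have htg : Relation.TransGen R (a : W) (a : W) := by
    have := hiter k a
    rwa [← hk, hcyc] at this
  exact ⟨a, a.2, collapse _ _ (hram _ a.2) htg⟩
end

section
/- Every frame that is a quasi-tree satisfies the frame condition Γ₂. -/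
/-- `IsTPath T a l b`: `l` is the list of successive vertices of a `T`-path from `a` to `b`
(excluding `a`, ending with `b` when `l` is nonempty); its length is the length of `l`. -/
def IsTPath {W : Type*} (T : W → W → Prop) : W → List W → W → Prop
  | a, [], b => a = b
  | a, c :: l, b => T a c ∧ IsTPath T c l b

/-- `(W, T)` is a rooted tree: there is a root from which every world is reachable by a
unique finite `T`-path. -/
def IsRootedTree {W : Type*} (T : W → W → Prop) : Prop :=
  ∃ root : W, ∀ w, ∃! l : List W, IsTPath T root l w

/-- A frame `(W, R)` is a quasi-tree if there is a rooted tree relation `T` on `W` such that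
`R w v` holds iff `T w v` holds, or `w` is ramified in `(W, R)` and `v` is a proper
`T`-descendant of `w`. -/
def IsQuasiTree {W : Type*} (R : W → W → Prop) : Prop :=
  ∃ T : W → W → Prop, IsRootedTree T ∧
    ∀ w v, R w v ↔ (T w v ∨ (Ramified R w ∧ Relation.TransGen T w v))

theorem isTPath_append {W : Type*} (T : W → W → Prop) :
    ∀ (l : List W) (a b c : W) (p : List W),
      IsTPath T a l b → IsTPath T b p c → IsTPath T a (l ++ p) c := by
  intro l
  induction l with
  | nil => intro a b c p h1 h2; cases h1; simpa using h2
  | cons d l ih =>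
      intro a b c p h1 h2
      exact ⟨h1.1, ih d b c _ h1.2 h2⟩

theorem transGen_path {W : Type*} (T : W → W → Prop) {a b : W} (h : Relation.TransGen T a b) :
    ∃ l : List W, l ≠ [] ∧ IsTPath T a l b := by
  induction h with
  | single hab => exact ⟨[_], by simp, hab, rfl⟩
  | tail _ hbc ih =>
      obtain ⟨l, hl, hp⟩ := ih
      exact ⟨l ++ [_], by simp, isTPath_append T l _ _ _ _ hp ⟨hbc, rfl⟩⟩

theorem rootedTree_irrefl {W : Type*} (T : W → W → Prop) (h : IsRootedTree T) (v : W) :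
    ¬ Relation.TransGen T v v := by
  intro hv
  obtain ⟨r, hr⟩ := h
  obtain ⟨l, hl, hu⟩ := hr v
  obtain ⟨p, hp, hpath⟩ := transGen_path T hv
  have : l ++ p = l := hu (l ++ p) (isTPath_append T l r v v p hl hpath)
  exact hp (by simpa using this)

/-- Every frame that is a quasi-tree satisfies the frame condition Γ₂. -/
theorem quasiTree_satisfies_gamma2 (W : Type) (R : W → W → Prop) (h : IsQuasiTree R) :
    FrameGamma2 R := by
  obtain ⟨T, hT, hR⟩ := h
  have hsub : ∀ a b, R a b → Relation.TransGen T a b := by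
    intro a b hab
    rcases (hR a b).1 hab with h1 | ⟨_, h2⟩
    · exact Relation.TransGen.single h1
    · exact h2
  constructor
  · intro x y z hx hxy hyz
    exact (hR x z).2 (Or.inr ⟨hx, (hsub x y hxy).trans (hsub y z hyz)⟩)
  · rintro ⟨v, _, hvv⟩
    exact absurd (hsub v v hvv) (rootedTree_irrefl T hT v)
end

section
/- Quasi-tree model property: if a modal formula φ is globally satisfied in some nonempty Kripke model whose frame satisfies Γ₂, then φ is globally satisfied in some nonempty Kripke model whose frame is a quasi-tree. -/
namespace QT

variable {W : Type}

lemma isTPath_last (T : W → W → Prop) :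
    ∀ (l : List W) (a b : W), IsTPath T a l b → b = l.getLastD a := by
  intro l
  induction l with
  | nil => intro a b h; exact h.symm
  | cons c l ih =>
      intro a b h
      rw [List.getLastD_cons]
      exact ih c b h.2

lemma isTPath_snoc (T : W → W → Prop) :
    ∀ (l : List W) (a x b : W),
      IsTPath T a (l ++ [x]) b ↔
        (IsTPath T a l (l.getLastD a) ∧ T (l.getLastD a) x ∧ b = x) := by
  intro l
  induction l with
  | nil =>
      intro a x b
      constructor
      · rintro ⟨h1, h2⟩
        exact ⟨rfl, h1, h2.symm⟩
      · rintro ⟨-, h2, rfl⟩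
        exact ⟨h2, rfl⟩
  | cons c l ih =>
      intro a x b
      rw [List.getLastD_cons]
      constructor
      · rintro ⟨h1, h2⟩
        rcases (ih c x b).1 h2 with ⟨p1, p2, p3⟩
        exact ⟨⟨h1, p1⟩, p2, p3⟩
      · rintro ⟨⟨h1, h2⟩, h3, h4⟩
        exact ⟨h1, (ih c x b).2 ⟨h2, h3, h4⟩⟩

end QT

namespace QT

variable {W : Type}

section Unravel

variable (R : W → W → Prop) (w0 : W)

/-- `l` is an `R`-path starting at `w0`. -/
def Good (l : List W) : Prop := IsTPath R w0 l (l.getLastD w0)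

/-- The worlds of the unraveled model. -/
def PW : Type := {l : List W // Good R w0 l}

/-- Endpoint of a path. -/
def ep (l : PW R w0) : W := l.val.getLastD w0

/-- Tree relation on paths. -/
def Tr (l m : PW R w0) : Prop := ∃ x, m.val = l.val ++ [x]

/-- Relation of the unraveled model. -/
def R' (l m : PW R w0) : Prop :=
  Tr R w0 l m ∨ (Ramified R (ep R w0 l) ∧ Relation.TransGen (Tr R w0) l m)

variable {R w0}

lemma good_nil : Good R w0 [] := rfl

lemma good_snoc {l : List W} {x : W} :
    Good R w0 (l ++ [x]) ↔ Good R w0 l ∧ R (l.getLastD w0) x := by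
  unfold Good
  rw [isTPath_snoc]
  simp [List.getLastD_concat]

lemma ep_snoc {l : List W} {x : W} (h : Good R w0 (l ++ [x])) :
    (l ++ [x] : List W).getLastD w0 = x := List.getLastD_concat

lemma tr_forth {l m : PW R w0} (h : Tr R w0 l m) : R (ep R w0 l) (ep R w0 m) := by
  obtain ⟨x, hx⟩ := h
  have hm := m.property
  rw [hx] at hm
  rcases good_snoc.1 hm with ⟨-, hR⟩
  have he : ep R w0 m = x := by simp [ep, hx, List.getLastD_concat]
  rw [he]
  exact hR

lemma rprime_forth (hΓ : ∀ x y z, Ramified R x → R x y → R y z → R x z)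
    {l m : PW R w0} (h : R' R w0 l m) : R (ep R w0 l) (ep R w0 m) := by
  rcases h with h | ⟨hram, htg⟩
  · exact tr_forth h
  · induction htg with
    | single h => exact tr_forth h
    | tail _ h ih => exact hΓ _ _ _ hram ih (tr_forth h)

lemma rprime_back {l : PW R w0} {v : W} (h : R (ep R w0 l) v) :
    ∃ m : PW R w0, R' R w0 l m ∧ ep R w0 m = v := by
  refine ⟨⟨l.val ++ [v], good_snoc.2 ⟨l.property, h⟩⟩, Or.inl ⟨v, rfl⟩, ?_⟩
  simp [ep, List.getLastD_concat]

lemma tr_length : ∀ (p : List (PW R w0)) (a b : PW R w0),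
    IsTPath (Tr R w0) a p b → b.val.length = a.val.length + p.length := by
  intro p
  induction p with
  | nil => intro a b h; rw [show a = b from h]; simp
  | cons c p ih =>
      rintro a b ⟨⟨x, hx⟩, h2⟩
      have := ih c b h2
      simp [this, hx]
      omega

lemma tr_back_unique {c c' b : PW R w0} (h : Tr R w0 c b) (h' : Tr R w0 c' b) : c = c' := by
  obtain ⟨x, hx⟩ := h
  obtain ⟨y, hy⟩ := h'
  apply Subtype.ext
  have : c.val ++ [x] = c'.val ++ [y] := by rw [← hx, ← hy]
  have h1 := congrArg List.dropLast this
  simpa [List.dropLast_concat] using h1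

lemma tree_exists : ∀ (l : List W) (h : Good R w0 l),
    ∃ p, IsTPath (Tr R w0) (⟨[], good_nil⟩ : PW R w0) p ⟨l, h⟩ := by
  intro l
  induction l using List.reverseRecOn with
  | nil => intro h; exact ⟨[], rfl⟩
  | append_singleton l x ih =>
      intro h
      rcases good_snoc.1 h with ⟨hl, -⟩
      obtain ⟨p, hp⟩ := ih hl
      refine ⟨p ++ [⟨l ++ [x], h⟩], ?_⟩
      refine (isTPath_snoc _ _ _ _ _).2 ?_
      have hlast : (⟨l, hl⟩ : PW R w0) = p.getLastD ⟨[], good_nil⟩ :=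
        isTPath_last _ _ _ _ hp
      refine ⟨by rwa [← hlast], ?_, rfl⟩
      rw [← hlast]
      exact ⟨x, rfl⟩

lemma tree_unique : ∀ (n : ℕ) (q p : List (PW R w0)) (a b : PW R w0),
    q.length = n → IsTPath (Tr R w0) a p b → IsTPath (Tr R w0) a q b → p = q := by
  intro n
  induction n using Nat.strong_induction_on with
  | _ n ih =>
    intro q p a b hn hp hq
    rcases List.eq_nil_or_concat q with rfl | ⟨q', e, hqe⟩
    · have hab : a = b := hq
      have := tr_length p a b hp
      rw [← hab] at this
      have : p.length = 0 := by omega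
      exact List.length_eq_zero_iff.1 this
    · rw [List.concat_eq_append] at hqe
      subst hqe
      rcases List.eq_nil_or_concat p with rfl | ⟨p', d, hpe⟩
      · have hab : a = b := hp
        have := tr_length (q' ++ [e]) a b hq
        rw [← hab] at this
        simp at this
      · rw [List.concat_eq_append] at hpe
        subst hpe
        rw [isTPath_snoc] at hp hq
        obtain ⟨hp1, hp2, rfl⟩ := hp
        obtain ⟨hq1, hq2, he⟩ := hq
        subst he
        have hcc : p'.getLastD a = q'.getLastD a := tr_back_unique hp2 hq2
        rw [hcc] at hp1
        have hlen : q'.length < n := by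
          simp at hn; omega
        have := ih q'.length hlen q' p' a (q'.getLastD a) rfl hp1 hq1
        rw [this]

lemma ramified_iff (hΓ : ∀ x y z, Ramified R x → R x y → R y z → R x z) (l : PW R w0) :
    Ramified (R' R w0) l ↔ Ramified R (ep R w0 l) := by
  constructor
  · rintro ⟨f, hinj, hf⟩
    by_cases hram : Ramified R (ep R w0 l)
    · exact hram
    · exfalso
      apply hram
      have hx : ∀ i, ∃ x, (f i).val = l.val ++ [x] := by
        intro i
        rcases hf i with h | ⟨h, -⟩
        · exact h
        · exact absurd h hram
      choose x hxv using hx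
      refine ⟨x, ?_, ?_⟩
      · intro i j hij
        apply hinj
        apply Subtype.ext
        rw [hxv i, hxv j, hij]
      · intro i
        have := (f i).property
        rw [hxv i] at this
        exact (good_snoc.1 this).2
  · rintro ⟨f, hinj, hf⟩
    refine ⟨fun i => ⟨l.val ++ [f i], good_snoc.2 ⟨l.property, hf i⟩⟩, ?_, ?_⟩
    · intro i j hij
      apply hinj
      have := congrArg Subtype.val hij
      simpa using this
    · intro i
      exact Or.inl ⟨f i, rfl⟩

lemma sat_iff (hΓ : ∀ x y z, Ramified R x → R x y → R y z → R x z)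
    (π : W → ℕ → Prop) :
    ∀ (ψ : ModalFormula) (l : PW R w0),
      Sat (R' R w0) (fun l n => π (ep R w0 l) n) l ψ ↔ Sat R π (ep R w0 l) ψ := by
  intro ψ
  induction ψ with
  | var n => intro l; exact Iff.rfl
  | neg f ih => intro l; exact not_congr (ih l)
  | and f g ihf ihg => intro l; exact and_congr (ihf l) (ihg l)
  | or f g ihf ihg => intro l; exact or_congr (ihf l) (ihg l)
  | dia f ih =>
      intro l
      constructor
      · rintro ⟨m, hm, hs⟩
        exact ⟨ep R w0 m, rprime_forth hΓ hm, (ih m).1 hs⟩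
      · rintro ⟨v, hv, hs⟩
        obtain ⟨m, hm, he⟩ := rprime_back hv
        exact ⟨m, hm, (ih m).2 (he ▸ hs)⟩
  | box f ih =>
      intro l
      constructor
      · intro h v hv
        obtain ⟨m, hm, he⟩ := rprime_back hv
        exact he ▸ (ih m).1 (h m hm)
      · intro h m hm
        exact (ih m).2 (h _ (rprime_forth hΓ hm))

end Unravel

end QT

/-- Quasi-tree model property: if a modal formula is globally satisfied in some nonempty
Kripke model whose frame satisfies Γ₂, then it is globally satisfied in some nonempty Kripke
model whose frame is a quasi-tree. -/
theorem gamma2_quasiTree_model_property (φ : ModalFormula)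
    (h : ∃ (W : Type) (R : W → W → Prop) (π : W → ℕ → Prop),
      Nonempty W ∧ FrameGamma2 R ∧ GlobalSat R π φ) :
    ∃ (W : Type) (R : W → W → Prop) (π : W → ℕ → Prop),
      Nonempty W ∧ IsQuasiTree R ∧ GlobalSat R π φ := by
  obtain ⟨W, R, π, ⟨w0⟩, ⟨hΓa, -⟩, hsat⟩ := h
  refine ⟨QT.PW R w0, QT.R' R w0, fun l n => π (QT.ep R w0 l) n,
    ⟨⟨[], QT.good_nil⟩⟩, ?_, ?_⟩
  · refine ⟨QT.Tr R w0, ⟨⟨[], QT.good_nil⟩, ?_⟩, ?_⟩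
    · rintro ⟨l, hl⟩
      obtain ⟨p, hp⟩ := QT.tree_exists l hl
      exact ⟨p, hp, fun q hq => QT.tree_unique p.length p q _ _ rfl hq hp⟩
    · intro l m
      rw [QT.ramified_iff hΓa]
      exact Iff.rfl
  · intro l
    exact (QT.sat_iff hΓa π φ l).2 (hsat _)
end
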